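/- arXiv:2506.20943 — 5 statements merged into one kernel-verified Lean document; each statement's English description precedes it below -/
import Mathlib

section
/- Let N ≥ 2 be an integer, 0 < s1 < 1 with N > 2·s1, and let p, q be reals with 2 < q < 2 + 4·s1/N < p < 2N/(N − 2·s1). Let a, μ, Cp, Cq > 0 satisfy condition (A1): μ · a^{q − N(q−2)/(2s1) + (p − N(p−2)/(2s1))·(4s1 − N(q−2))/(N(p−2) − 4s1)} < ( p(4s1 − N(q−2)) / (2N·Cp·(p−q)) )^{(4s1 − N(q−2))/(N(p−2) − 4s1)} · ( (N(p−2) − 4s1) / (2N(p−q)) ) · q/Cq. Define h : (0,∞) → ℝ by h(t) = (1/2)t² − (Cp/p)·a^{p − N(p−2)/(2s1)}·t^{N(p−2)/(2s1)} − (μ·Cq/q)·a^{q − N(q−2)/(2s1)}·t^{N(q−2)/(2s1)}. Then there exist 0 < R0 < R1 such that h(R0) = 0 = h(R1), and for t > 0 one has h(t) > 0 if and only if t ∈ (R0, R1); moreover h has exactly two critical points on (0,∞): a strict local minimum point t₁ ∈ (0, R0) with h(t₁) < 0, and a strict global maximum point t₂ ∈ (R0, R1) with h(t₂) > 0. -/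
open Real Set


noncomputable def bumpF (k c d e C : ℝ) : ℝ → ℝ := fun t => k * t ^ d - c * t ^ (d + e) - C

lemma bumpF_apply (k c d e C t : ℝ) : bumpF k c d e C t = k * t ^ d - c * t ^ (d + e) - C := rfl

lemma bumpF_hasDeriv (k c d e C : ℝ) {t : ℝ} (ht : 0 < t) :
    HasDerivAt (bumpF k c d e C)
      (t ^ (d - 1) * (k * d - c * (d + e) * t ^ e)) t := by
  have h1 : HasDerivAt (fun t : ℝ => t ^ d) (d * t ^ (d - 1)) t :=
    Real.hasDerivAt_rpow_const (Or.inl ht.ne')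
  have h2 : HasDerivAt (fun t : ℝ => t ^ (d + e)) ((d + e) * t ^ (d + e - 1)) t :=
    Real.hasDerivAt_rpow_const (Or.inl ht.ne')
  have h := ((h1.const_mul k).sub (h2.const_mul c)).sub_const C
  refine HasDerivAt.congr_deriv h ?_
  have : t ^ (d + e - 1) = t ^ (d - 1) * t ^ e := by
    rw [← Real.rpow_add ht]; ring_nf
  rw [this]; ring

lemma bumpF_cont (k c d e C : ℝ) (hd : 0 < d) (he : 0 < e) :
    Continuous (bumpF k c d e C) := by
  have h1 : Continuous (fun t : ℝ => t ^ d) := by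
    rw [continuous_iff_continuousAt]
    exact fun x => Real.continuousAt_rpow_const x d (Or.inr hd.le)
  have h2 : Continuous (fun t : ℝ => t ^ (d + e)) := by
    rw [continuous_iff_continuousAt]
    exact fun x => Real.continuousAt_rpow_const x (d + e) (Or.inr (by linarith))
  exact ((continuous_const.mul h1).sub (continuous_const.mul h2)).sub continuous_const

lemma bumpF_mono (k c d e C m : ℝ) (hc : 0 < c) (hd : 0 < d)
    (he : 0 < e) (hm : 0 < m) (hme : c * (d + e) * m ^ e = k * d) :
    StrictMonoOn (bumpF k c d e C) (Icc 0 m) := by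
  apply strictMonoOn_of_deriv_pos (convex_Icc 0 m) (bumpF_cont k c d e C hd he).continuousOn
  intro x hx
  rw [interior_Icc, mem_Ioo] at hx
  rw [(bumpF_hasDeriv k c d e C hx.1).deriv]
  have hx0 : 0 < x ^ (d - 1) := Real.rpow_pos_of_pos hx.1 _
  have hlt : x ^ e < m ^ e := Real.rpow_lt_rpow hx.1.le hx.2 he
  have hde : 0 < c * (d + e) := by positivity
  nlinarith [mul_lt_mul_of_pos_left hlt hde]

lemma bumpF_anti (k c d e C m : ℝ) (hc : 0 < c) (hd : 0 < d)
    (he : 0 < e) (hm : 0 < m) (hme : c * (d + e) * m ^ e = k * d) :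
    StrictAntiOn (bumpF k c d e C) (Ici m) := by
  apply strictAntiOn_of_deriv_neg (convex_Ici m) (bumpF_cont k c d e C hd he).continuousOn
  intro x hx
  rw [interior_Ici, mem_Ioi] at hx
  have hx0' : 0 < x := hm.trans hx
  rw [(bumpF_hasDeriv k c d e C hx0').deriv]
  have hx0 : 0 < x ^ (d - 1) := Real.rpow_pos_of_pos hx0' _
  have hlt : m ^ e < x ^ e := Real.rpow_lt_rpow hm.le hx he
  have hde : 0 < c * (d + e) := by positivity
  nlinarith [mul_lt_mul_of_pos_left hlt hde]
set_option maxHeartbeats 2000000 in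
lemma key_lemma (α β A B : ℝ) (hβ0 : 0 < β) (hβ2 : β < 2) (hα2 : 2 < α)
    (hA : 0 < A) (hB : 0 < B)
    (hcond : B < (α - 2) / (2 * (α - β)) *
      ((2 - β) / (2 * A * (α - β))) ^ ((2 - β) / (α - 2)))
    (h : ℝ → ℝ)
    (hh : ∀ t : ℝ, 0 < t → h t = (1 / 2) * t ^ 2 - A * t ^ α - B * t ^ β) :
    ∃ R0 R1 t1 t2 : ℝ, 0 < R0 ∧ R0 < R1 ∧ h R0 = 0 ∧ h R1 = 0 ∧
      (∀ t : ℝ, 0 < t → (0 < h t ↔ t ∈ Set.Ioo R0 R1)) ∧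
      (deriv h t1 = 0 ∧ deriv h t2 = 0 ∧
        ∀ t : ℝ, 0 < t → deriv h t = 0 → t = t1 ∨ t = t2) ∧
      (t1 ∈ Set.Ioo 0 R0 ∧
        (∃ ε > 0, ∀ t ∈ Set.Ioo (t1 - ε) (t1 + ε), t ≠ t1 → h t1 < h t) ∧ h t1 < 0) ∧
      (t2 ∈ Set.Ioo R0 R1 ∧ (∀ t : ℝ, 0 < t → t ≠ t2 → h t < h t2) ∧ 0 < h t2) := by
  obtain ⟨d, hd_def⟩ : ∃ d : ℝ, d = 2 - β := ⟨_, rfl⟩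
  obtain ⟨e, he_def⟩ : ∃ e : ℝ, e = α - 2 := ⟨_, rfl⟩
  have hd : (0:ℝ) < d := by rw [hd_def]; linarith
  have he : (0:ℝ) < e := by rw [he_def]; linarith
  have hs : 0 < d + e := by linarith
  have hα0 : (0:ℝ) < α := by linarith
  have hαβ : α - β = d + e := by rw [hd_def, he_def]; ring
  rw [← hd_def, ← he_def, hαβ] at hcond
  obtain ⟨X1, hX1_def⟩ : ∃ X1 : ℝ, X1 = d / (2 * A * (d + e)) := ⟨_, rfl⟩
  obtain ⟨X2, hX2_def⟩ : ∃ X2 : ℝ, X2 = d / (A * α * (d + e)) := ⟨_, rfl⟩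
  have hX1pos : 0 < X1 := by rw [hX1_def]; positivity
  have hX2pos : 0 < X2 := by rw [hX2_def]; positivity
  rw [← hX1_def] at hcond
  obtain ⟨m1, hm1_def⟩ : ∃ m1 : ℝ, m1 = X1 ^ (1 / e) := ⟨_, rfl⟩
  obtain ⟨m2, hm2_def⟩ : ∃ m2 : ℝ, m2 = X2 ^ (1 / e) := ⟨_, rfl⟩
  have hm1pos : 0 < m1 := by rw [hm1_def]; exact Real.rpow_pos_of_pos hX1pos _
  have hm2pos : 0 < m2 := by rw [hm2_def]; exact Real.rpow_pos_of_pos hX2pos _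
  have hm1e : m1 ^ e = X1 := by
    rw [hm1_def, ← Real.rpow_mul hX1pos.le, one_div, inv_mul_cancel₀ he.ne', Real.rpow_one]
  have hm2e : m2 ^ e = X2 := by
    rw [hm2_def, ← Real.rpow_mul hX2pos.le, one_div, inv_mul_cancel₀ he.ne', Real.rpow_one]
  have hm1d : m1 ^ d = X1 ^ (d / e) := by
    rw [hm1_def, ← Real.rpow_mul hX1pos.le, show 1 / e * d = d / e by ring]
  have hm2d : m2 ^ d = X2 ^ (d / e) := by
    rw [hm2_def, ← Real.rpow_mul hX2pos.le, show 1 / e * d = d / e by ring]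
  have hme1 : A * (d + e) * m1 ^ e = (1/2) * d := by
    rw [hm1e, hX1_def]; field_simp [hA.ne', hs.ne']
  have hme2 : (A * α) * (d + e) * m2 ^ e = 1 * d := by
    rw [hm2e, hX2_def]; field_simp [hA.ne', hα0.ne', hs.ne']
  -- the two bump functions
  obtain ⟨Φ, hΦ_def⟩ : ∃ Φ : ℝ → ℝ, Φ = bumpF (1/2) A d e B := ⟨_, rfl⟩
  obtain ⟨Ψ, hΨ_def⟩ : ∃ Ψ : ℝ → ℝ, Ψ = bumpF 1 (A * α) d e (B * β) := ⟨_, rfl⟩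
  have Φmono : StrictMonoOn Φ (Icc 0 m1) := by
    rw [hΦ_def]; exact bumpF_mono _ _ _ _ _ _ hA hd he hm1pos hme1
  have Φanti : StrictAntiOn Φ (Ici m1) := by
    rw [hΦ_def]; exact bumpF_anti _ _ _ _ _ _ hA hd he hm1pos hme1
  have hAα : 0 < A * α := by positivity
  have Ψmono : StrictMonoOn Ψ (Icc 0 m2) := by
    rw [hΨ_def]; exact bumpF_mono _ _ _ _ _ _ hAα hd he hm2pos hme2
  have Ψanti : StrictAntiOn Ψ (Ici m2) := by
    rw [hΨ_def]; exact bumpF_anti _ _ _ _ _ _ hAα hd he hm2pos hme2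
  -- condition restated
  have hcond' : B < e / (2 * (d + e)) * m1 ^ d := by rw [hm1d]; exact hcond
  -- m2 < m1
  have hm2m1 : m2 < m1 := by
    rw [hm1_def, hm2_def]
    apply Real.rpow_lt_rpow hX2pos.le _ (by positivity)
    rw [hX1_def, hX2_def]
    apply div_lt_div_of_pos_left hd (by positivity)
    have h7 : A * (d + e) * 2 < A * (d + e) * α := mul_lt_mul_of_pos_left hα2 (mul_pos hA hs)
    linarith
  -- value of Φ at m1
  have hΦm1pos : 0 < Φ m1 := by
    have h5 : m1 ^ (d + e) = m1 ^ d * m1 ^ e := Real.rpow_add hm1pos _ _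
    have hAX1 : A * X1 = d / (2 * (d + e)) := by
      rw [hX1_def]; field_simp [hA.ne', hs.ne']
    have h9 : (1:ℝ)/2 - d/(2*(d+e)) = e/(2*(d+e)) := by
      field_simp; ring
    have hval : Φ m1 = m1 ^ d * (e / (2 * (d + e))) - B := by
      rw [hΦ_def, bumpF_apply, h5, hm1e,
        show A * (m1 ^ d * X1) = m1 ^ d * (A * X1) from by ring, hAX1]
      linear_combination (m1 ^ d) * h9
    rw [hval]
    linarith [hcond']
  -- key inequality : β/2 < (2/α)^(d/e)
  have hkey : β / 2 < (2 / α) ^ (d / e) := by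
    have h2α : (0:ℝ) < 2 / α := by positivity
    rw [Real.rpow_def_of_pos h2α]
    rw [show β / 2 = Real.exp (Real.log (β / 2)) from (Real.exp_log (by positivity)).symm]
    apply Real.exp_lt_exp.mpr
    have hlogα : Real.log (2 / α) = - Real.log (α / 2) := by
      rw [← Real.log_inv, inv_div]
    have h1 : Real.log (α / 2) ≤ e / 2 := by
      have := Real.log_le_sub_one_of_pos (show (0:ℝ) < α / 2 by linarith)
      rw [he_def]; linarith
    have h2 : Real.log (β / 2) < β / 2 - 1 :=
      Real.log_lt_sub_one_of_pos (by positivity)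
        (by intro hc; rw [div_eq_one_iff_eq (by norm_num : (2:ℝ) ≠ 0)] at hc; linarith)
    have h3 : Real.log (α / 2) * (d / e) ≤ e / 2 * (d / e) :=
      mul_le_mul_of_nonneg_right h1 (by positivity)
    have h4 : e / 2 * (d / e) = d / 2 := by field_simp [he.ne']
    rw [hlogα, neg_mul]
    rw [h4] at h3
    linarith [hd_def]
  -- condition for Ψ
  have hm1dpos : 0 < m1 ^ d := Real.rpow_pos_of_pos hm1pos _
  have hX2X1 : X2 = X1 * (2 / α) := by
    rw [hX1_def, hX2_def]; field_simp [hA.ne', hα0.ne', hs.ne']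
  have hm2d' : m2 ^ d = m1 ^ d * (2 / α) ^ (d / e) := by
    rw [hm2d, hm1d, hX2X1, Real.mul_rpow hX1pos.le (by positivity)]
  have hcond2 : B * β < m2 ^ d * (e / (d + e)) := by
    calc B * β < (e / (2 * (d + e)) * m1 ^ d) * β := mul_lt_mul_of_pos_right hcond' hβ0
    _ = ((e / (d + e)) * m1 ^ d) * (β / 2) := by field_simp [hs.ne']
    _ < ((e / (d + e)) * m1 ^ d) * ((2 / α) ^ (d / e)) :=
        mul_lt_mul_of_pos_left hkey (mul_pos (div_pos he hs) hm1dpos)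
    _ = m2 ^ d * (e / (d + e)) := by rw [hm2d']; ring
  have hΨm2pos : 0 < Ψ m2 := by
    have h5 : m2 ^ (d + e) = m2 ^ d * m2 ^ e := Real.rpow_add hm2pos _ _
    have hAX2 : A * α * X2 = d / (d + e) := by
      rw [hX2_def]; field_simp [hA.ne', hα0.ne', hs.ne']
    have h9 : (1:ℝ) - d/(d+e) = e/(d+e) := by field_simp; ring
    have hval : Ψ m2 = m2 ^ d * (e / (d + e)) - B * β := by
      rw [hΨ_def, bumpF_apply, h5, hm2e,
        show A * α * (m2 ^ d * X2) = m2 ^ d * (A * α * X2) from by ring, hAX2]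
      linear_combination (m2 ^ d) * h9
    rw [hval]; linarith
  -- small point ε
  obtain ⟨ε, hε_def⟩ : ∃ ε : ℝ, ε = min m2 ((B * β) ^ (1 / d)) / 2 := ⟨_, rfl⟩
  have hBβpow : 0 < (B * β) ^ (1 / d) := Real.rpow_pos_of_pos (by positivity) _
  have hε0 : 0 < ε := by
    rw [hε_def]; have := lt_min hm2pos hBβpow; positivity
  have hεm2 : ε < m2 := by
    have h1 := min_le_left m2 ((B * β) ^ (1 / d))
    rw [hε_def]; linarith
  have hεm1 : ε < m2 := hεm2
  have hεd : ε ^ d < B * β := by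
    have h1 : ε < (B * β) ^ (1 / d) := by
      have h2 := min_le_right m2 ((B * β) ^ (1 / d))
      rw [hε_def]; linarith
    have h3 := Real.rpow_lt_rpow hε0.le h1 hd
    rwa [← Real.rpow_mul (by positivity : (0:ℝ) ≤ B * β), one_div,
      inv_mul_cancel₀ hd.ne', Real.rpow_one] at h3
  have hεde : 0 < ε ^ (d + e) := Real.rpow_pos_of_pos hε0 _
  have hΦε : Φ ε < 0 := by
    rw [hΦ_def, bumpF_apply]
    have h7 : B * β < B * 2 := mul_lt_mul_of_pos_left hβ2 hB
    linarith [hεd, h7, mul_pos hA hεde]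
  have hΨε : Ψ ε < 0 := by
    rw [hΨ_def, bumpF_apply]
    linarith [hεd, mul_pos hAα hεde]
  -- big point T
  obtain ⟨T, hT_def⟩ : ∃ T : ℝ, T = max m1 ((1 / A) ^ (1 / e)) + 1 := ⟨_, rfl⟩
  have hTm1 : m1 < T := by
    have := le_max_left m1 ((1 / A) ^ (1 / e)); rw [hT_def]; linarith
  have hTm2 : m2 < T := hm2m1.trans hTm1
  have hT0 : 0 < T := hm1pos.trans hTm1
  have hATe : 1 < A * T ^ e := by
    have h1 : (1 / A) ^ (1 / e) < T := by
      have := le_max_right m1 ((1 / A) ^ (1 / e)); rw [hT_def]; linarith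
    have h2 := Real.rpow_lt_rpow (Real.rpow_pos_of_pos (by positivity) (1/e)).le h1 he
    rw [← Real.rpow_mul (by positivity : (0:ℝ) ≤ 1 / A),
      show (1:ℝ) / e * e = 1 by field_simp, Real.rpow_one] at h2
    calc (1:ℝ) = A * (1 / A) := by field_simp
    _ < A * T ^ e := by exact mul_lt_mul_of_pos_left h2 hA
  have hTde : T ^ (d + e) = T ^ d * T ^ e := Real.rpow_add hT0 _ _
  have hTd : 0 < T ^ d := Real.rpow_pos_of_pos hT0 _
  have hΦT : Φ T < 0 := by
    rw [hΦ_def, bumpF_apply, hTde]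
    linarith [mul_lt_mul_of_pos_left hATe hTd, hTd, hB]
  have hΨT : Ψ T < 0 := by
    rw [hΨ_def, bumpF_apply, hTde]
    have hATe' : (1:ℝ) < A * α * T ^ e := by
      have h7 : (A * T ^ e) * 2 < (A * T ^ e) * α :=
        mul_lt_mul_of_pos_left hα2 (mul_pos hA (Real.rpow_pos_of_pos hT0 e))
      linarith [hATe, h7]
    linarith [mul_lt_mul_of_pos_left hATe' hTd, mul_pos hB hβ0]
  -- zeros via IVT
  have hcontΦ : Continuous Φ := by rw [hΦ_def]; exact bumpF_cont _ _ _ _ _ hd he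
  have hcontΨ : Continuous Ψ := by rw [hΨ_def]; exact bumpF_cont _ _ _ _ _ hd he
  obtain ⟨R0, hR0mem, hR0eq⟩ :=
    intermediate_value_Ioo (hεm1.trans hm2m1).le hcontΦ.continuousOn
      (show (0:ℝ) ∈ Ioo (Φ ε) (Φ m1) from ⟨hΦε, hΦm1pos⟩)
  obtain ⟨R1, hR1mem, hR1eq⟩ :=
    intermediate_value_Ioo' hTm1.le hcontΦ.continuousOn
      (show (0:ℝ) ∈ Ioo (Φ T) (Φ m1) from ⟨hΦT, hΦm1pos⟩)
  obtain ⟨t1, ht1mem, ht1eq⟩ :=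
    intermediate_value_Ioo hεm2.le hcontΨ.continuousOn
      (show (0:ℝ) ∈ Ioo (Ψ ε) (Ψ m2) from ⟨hΨε, hΨm2pos⟩)
  obtain ⟨t2, ht2mem, ht2eq⟩ :=
    intermediate_value_Ioo' hTm2.le hcontΨ.continuousOn
      (show (0:ℝ) ∈ Ioo (Ψ T) (Ψ m2) from ⟨hΨT, hΨm2pos⟩)
  have hR00 : 0 < R0 := hε0.trans hR0mem.1
  have hR10 : 0 < R1 := hm1pos.trans hR1mem.1
  have ht10 : 0 < t1 := hε0.trans ht1mem.1
  have ht20 : 0 < t2 := hm2pos.trans ht2mem.1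
  have hR0R1 : R0 < R1 := hR0mem.2.trans hR1mem.1
  have ht1t2 : t1 < t2 := ht1mem.2.trans ht2mem.1
  -- h in terms of Φ
  have hh' : ∀ t : ℝ, 0 < t → h t = t ^ β * Φ t := by
    intro t ht
    have e1 : t ^ β * t ^ d = t ^ 2 := by
      rw [← Real.rpow_add ht, show β + d = 2 by rw [hd_def]; ring]
      rw [show (2:ℝ) = ((2:ℕ):ℝ) by norm_num, Real.rpow_natCast]
    have e2 : t ^ β * t ^ (d + e) = t ^ α := by
      rw [← Real.rpow_add ht]; congr 1; rw [hd_def, he_def]; ring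
    calc h t = (1 / 2) * t ^ 2 - A * t ^ α - B * t ^ β := hh t ht
    _ = (1/2) * (t ^ β * t ^ d) - A * (t ^ β * t ^ (d + e)) - B * t ^ β := by rw [e1, e2]
    _ = t ^ β * Φ t := by rw [hΦ_def, bumpF_apply]; ring
  have hsign : ∀ t : ℝ, 0 < t → (0 < h t ↔ 0 < Φ t) := by
    intro t ht
    have hb := Real.rpow_pos_of_pos ht β
    rw [hh' t ht]
    constructor
    · intro H; by_contra hc; push_neg at hc
      have h7 : t ^ β * Φ t ≤ 0 := mul_nonpos_iff.mpr (Or.inl ⟨hb.le, hc⟩)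
      linarith
    · intro H; exact mul_pos hb H
  have hzero : ∀ t : ℝ, 0 < t → Φ t = 0 → h t = 0 := by
    intro t ht H; rw [hh' t ht, H, mul_zero]
  -- deriv of h
  have hg : ∀ t : ℝ, 0 < t → deriv h t = t ^ (β - 1) * Ψ t := by
    intro t ht
    have hev : h =ᶠ[nhds t] (fun t => (1 / 2) * t ^ 2 - A * t ^ α - B * t ^ β) := by
      filter_upwards [isOpen_Ioi.mem_nhds ht] with x hx
      exact hh x hx
    rw [hev.deriv_eq]
    have d1 : HasDerivAt (fun t : ℝ => t ^ 2) (2 * t) t := by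
      simpa using hasDerivAt_pow 2 t
    have d2 : HasDerivAt (fun t : ℝ => t ^ α) (α * t ^ (α - 1)) t :=
      Real.hasDerivAt_rpow_const (Or.inl ht.ne')
    have d3 : HasDerivAt (fun t : ℝ => t ^ β) (β * t ^ (β - 1)) t :=
      Real.hasDerivAt_rpow_const (Or.inl ht.ne')
    have hD := ((d1.const_mul (1/2 : ℝ)).sub (d2.const_mul A)).sub (d3.const_mul B)
    rw [HasDerivAt.deriv (f := fun t : ℝ => (1 / 2) * t ^ 2 - A * t ^ α - B * t ^ β) hD]
    have e1 : t ^ (β - 1) * t ^ d = t := by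
      rw [← Real.rpow_add ht, show β - 1 + d = 1 by rw [hd_def]; ring, Real.rpow_one]
    have e2 : t ^ (β - 1) * t ^ (d + e) = t ^ (α - 1) := by
      rw [← Real.rpow_add ht]; congr 1; rw [hd_def, he_def]; ring
    have hΨt : t ^ (β - 1) * Ψ t = t - (A * α) * t ^ (α - 1) - (B * β) * t ^ (β - 1) := by
      calc t ^ (β - 1) * Ψ t
          = (t ^ (β - 1) * t ^ d) - (A * α) * (t ^ (β - 1) * t ^ (d + e))
              - (B * β) * t ^ (β - 1) := by rw [hΨ_def, bumpF_apply]; ring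
      _ = t - (A * α) * t ^ (α - 1) - (B * β) * t ^ (β - 1) := by rw [e1, e2]
    rw [hΨt]; ring
  -- memberships
  have ht1m2 : t1 ∈ Icc (0:ℝ) m2 := ⟨ht10.le, ht1mem.2.le⟩
  have ht2m2 : t2 ∈ Ici m2 := ht2mem.1.le
  -- sign characterization for Φ
  have hΦiff : ∀ t : ℝ, 0 < t → (0 < Φ t ↔ R0 < t ∧ t < R1) := by
    intro t ht
    constructor
    · intro H
      constructor
      · by_contra hc; push_neg at hc
        have h6 : Φ t ≤ Φ R0 :=
          Φmono.monotoneOn ⟨ht.le, hc.trans hR0mem.2.le⟩ ⟨hR00.le, hR0mem.2.le⟩ hc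
        rw [hR0eq] at h6; linarith
      · by_contra hc; push_neg at hc
        have h6 : Φ t ≤ Φ R1 :=
          Φanti.antitoneOn hR1mem.1.le (hR1mem.1.le.trans hc) hc
        rw [hR1eq] at h6; linarith
    · rintro ⟨h1, h2⟩
      rcases le_or_gt t m1 with hc | hc
      · have h6 : Φ R0 < Φ t := Φmono ⟨hR00.le, hR0mem.2.le⟩ ⟨ht.le, hc⟩ h1
        rw [hR0eq] at h6; linarith
      · have h6 : Φ R1 < Φ t := Φanti hc.le hR1mem.1.le h2
        rw [hR1eq] at h6; linarith
  have hhiff : ∀ t : ℝ, 0 < t → (0 < h t ↔ R0 < t ∧ t < R1) :=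
    fun t ht => (hsign t ht).trans (hΦiff t ht)
  -- continuity of h on positive sets
  have hgcont : Continuous (fun t : ℝ => (1 / 2) * t ^ 2 - A * t ^ α - B * t ^ β) := by
    have c1 : Continuous (fun t : ℝ => t ^ α) := by
      rw [continuous_iff_continuousAt]
      exact fun x => Real.continuousAt_rpow_const x α (Or.inr (by linarith))
    have c2 : Continuous (fun t : ℝ => t ^ β) := by
      rw [continuous_iff_continuousAt]
      exact fun x => Real.continuousAt_rpow_const x β (Or.inr hβ0.le)
    exact ((continuous_const.mul (continuous_pow 2)).sub (continuous_const.mul c1)).sub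
      (continuous_const.mul c2)
  have hconth : ∀ s : Set ℝ, s ⊆ Ioi 0 → ContinuousOn h s := by
    intro s hsub
    exact hgcont.continuousOn.congr (fun x hx => hh x (hsub hx))
  -- monotonicity of h
  have hanti1 : StrictAntiOn h (Ioc 0 t1) := by
    apply strictAntiOn_of_deriv_neg (convex_Ioc 0 t1) (hconth _ Ioc_subset_Ioi_self)
    intro x hx
    rw [interior_Ioc, mem_Ioo] at hx
    rw [hg x hx.1]
    apply mul_neg_of_pos_of_neg (Real.rpow_pos_of_pos hx.1 _)
    have h6 : Ψ x < Ψ t1 := Ψmono ⟨hx.1.le, hx.2.le.trans ht1mem.2.le⟩ ht1m2 hx.2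
    rw [ht1eq] at h6; linarith
  have hmono2 : StrictMonoOn h (Icc t1 t2) := by
    apply strictMonoOn_of_deriv_pos (convex_Icc t1 t2)
      (hconth _ (fun x hx => ht10.trans_le hx.1))
    intro x hx
    rw [interior_Icc, mem_Ioo] at hx
    have hx0 : 0 < x := ht10.trans hx.1
    rw [hg x hx0]
    apply mul_pos (Real.rpow_pos_of_pos hx0 _)
    rcases le_or_gt x m2 with hc | hc
    · have h6 : Ψ t1 < Ψ x := Ψmono ht1m2 ⟨hx0.le, hc⟩ hx.1
      rw [ht1eq] at h6; linarith
    · have h6 : Ψ t2 < Ψ x := Ψanti hc.le ht2m2 hx.2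
      rw [ht2eq] at h6; linarith
  have hanti3 : StrictAntiOn h (Ici t2) := by
    apply strictAntiOn_of_deriv_neg (convex_Ici t2)
      (hconth _ (fun x hx => ht20.trans_le hx))
    intro x hx
    rw [interior_Ici, mem_Ioi] at hx
    have hx0 : 0 < x := ht20.trans hx
    rw [hg x hx0]
    apply mul_neg_of_pos_of_neg (Real.rpow_pos_of_pos hx0 _)
    have h6 : Ψ x < Ψ t2 := Ψanti ht2m2 (ht2mem.1.trans hx).le hx
    rw [ht2eq] at h6; linarith
  -- h values
  have hhR0 : h R0 = 0 := hzero R0 hR00 hR0eq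
  have hhR1 : h R1 = 0 := hzero R1 hR10 hR1eq
  have hht1neg : h t1 < 0 := by
    have hhε : h ε < 0 := by
      rw [hh' ε hε0]
      exact mul_neg_of_pos_of_neg (Real.rpow_pos_of_pos hε0 _) hΦε
    have h6 : h t1 < h ε := hanti1 ⟨hε0, ht1mem.1.le⟩ ⟨ht10, le_refl t1⟩ ht1mem.1
    linarith
  have hhm1pos : 0 < h m1 := by
    rw [hh' m1 hm1pos]
    exact mul_pos (Real.rpow_pos_of_pos hm1pos _) hΦm1pos
  have ht1R0 : t1 < R0 := by
    have h6 : ¬ (R0 < t1 ∧ t1 < R1) := by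
      intro hc
      have := (hhiff t1 ht10).mpr hc
      linarith
    have h7 : t1 < R1 := ht1mem.2.trans (hm2m1.trans hR1mem.1)
    have h8 : t1 ≤ R0 := by
      by_contra hc; push_neg at hc
      exact h6 ⟨hc, h7⟩
    rcases lt_or_eq_of_le h8 with hlt | heq
    · exact hlt
    · exfalso; rw [heq, hhR0] at hht1neg; exact lt_irrefl 0 hht1neg
  have ht2R0 : R0 < t2 := by
    by_contra hc; push_neg at hc
    have h6 : h R1 < h R0 := hanti3 hc (hc.trans hR0R1.le) hR0R1
    rw [hhR0, hhR1] at h6; exact lt_irrefl 0 h6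
  have hht2pos : 0 < h t2 := by
    by_contra hc; push_neg at hc
    have h6 : ¬ (R0 < t2 ∧ t2 < R1) := fun hc2 => by
      have := (hhiff t2 ht20).mpr hc2; linarith
    have h7 : R1 ≤ t2 := by
      by_contra hc2; push_neg at hc2
      exact h6 ⟨ht2R0, hc2⟩
    have h8 : m1 < t2 := hR1mem.1.trans_le h7
    have h9 : h m1 < h t2 :=
      hmono2 ⟨(ht1mem.2.trans hm2m1).le, h8.le⟩ ⟨ht1t2.le, le_refl t2⟩ h8
    linarith
  have ht2R1 : t2 < R1 := ((hhiff t2 ht20).mp hht2pos).2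
  -- assemble
  refine ⟨R0, R1, t1, t2, hR00, hR0R1, hhR0, hhR1, ?_, ⟨?_, ?_, ?_⟩, ⟨?_, ?_, ?_⟩, ⟨?_, ?_, ?_⟩⟩
  · intro t ht; rw [mem_Ioo]; exact hhiff t ht
  · rw [hg t1 ht10, ht1eq, mul_zero]
  · rw [hg t2 ht20, ht2eq, mul_zero]
  · intro t ht hdt
    rw [hg t ht] at hdt
    have hb := Real.rpow_pos_of_pos ht (β - 1)
    have hΨt : Ψ t = 0 := by
      rcases mul_eq_zero.mp hdt with hc | hc
      · exact absurd hc hb.ne'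
      · exact hc
    rcases le_or_gt t m2 with hc | hc
    · left
      exact Ψmono.injOn ⟨ht.le, hc⟩ ht1m2 (hΨt.trans ht1eq.symm)
    · right
      exact Ψanti.injOn hc.le ht2m2 (hΨt.trans ht2eq.symm)
  · exact ⟨ht10, ht1R0⟩
  · refine ⟨min t1 (t2 - t1), lt_min ht10 (by linarith), ?_⟩
    intro t htmem htne
    rw [mem_Ioo] at htmem
    rcases lt_or_gt_of_ne htne with hlt | hgt
    · have hε1 : min t1 (t2 - t1) ≤ t1 := min_le_left _ _
      have ht0 : 0 < t := by linarith [htmem.1]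
      exact hanti1 ⟨ht0, hlt.le⟩ ⟨ht10, le_refl t1⟩ hlt
    · have hε2 : min t1 (t2 - t1) ≤ t2 - t1 := min_le_right _ _
      have ht2' : t ≤ t2 := by linarith [htmem.2]
      exact hmono2 ⟨le_refl t1, ht1t2.le⟩ ⟨hgt.le, ht2'⟩ hgt
  · exact hht1neg
  · exact ⟨ht2R0, ht2R1⟩
  · intro t ht htne
    rcases le_or_gt t t1 with hc | hc
    · have h6 : ¬ (0 < h t) := by
        intro hc2
        have := ((hhiff t ht).mp hc2).1
        linarith
      push_neg at h6
      linarith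
    · rcases lt_or_gt_of_ne htne with hlt | hgt
      · exact hmono2 ⟨hc.le, hlt.le⟩ ⟨ht1t2.le, le_refl t2⟩ hlt
      · exact hanti3 (le_refl t2) hgt.le hgt
  · exact hht2pos

set_option maxHeartbeats 1000000 in
theorem stmt0
    (N : ℕ) (hN : 2 ≤ N) (s1 : ℝ) (hs1 : 0 < s1) (hs1' : s1 < 1)
    (hNs1 : 2 * s1 < (N : ℝ))
    (p q : ℝ) (hq : 2 < q) (hq' : q < 2 + 4 * s1 / N)
    (hp : 2 + 4 * s1 / N < p) (hp' : p < 2 * N / (N - 2 * s1))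
    (a μ Cp Cq : ℝ) (ha : 0 < a) (hμ : 0 < μ) (hCp : 0 < Cp) (hCq : 0 < Cq)
    (hA1 : μ * a ^ (q - N * (q - 2) / (2 * s1) +
        (p - N * (p - 2) / (2 * s1)) * ((4 * s1 - N * (q - 2)) / (N * (p - 2) - 4 * s1)))
      < (p * (4 * s1 - N * (q - 2)) / (2 * N * Cp * (p - q))) ^
          ((4 * s1 - N * (q - 2)) / (N * (p - 2) - 4 * s1)) *
        ((N * (p - 2) - 4 * s1) / (2 * N * (p - q))) * (q / Cq))
    (h : ℝ → ℝ)
    (hh : ∀ t : ℝ, 0 < t → h t = (1 / 2) * t ^ 2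
        - (Cp / p) * a ^ (p - N * (p - 2) / (2 * s1)) * t ^ (N * (p - 2) / (2 * s1))
        - (μ * Cq / q) * a ^ (q - N * (q - 2) / (2 * s1)) * t ^ (N * (q - 2) / (2 * s1))) :
    ∃ R0 R1 t1 t2 : ℝ, 0 < R0 ∧ R0 < R1 ∧ h R0 = 0 ∧ h R1 = 0 ∧
      (∀ t : ℝ, 0 < t → (0 < h t ↔ t ∈ Set.Ioo R0 R1)) ∧
      (deriv h t1 = 0 ∧ deriv h t2 = 0 ∧
        ∀ t : ℝ, 0 < t → deriv h t = 0 → t = t1 ∨ t = t2) ∧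
      (t1 ∈ Set.Ioo 0 R0 ∧
        (∃ ε > 0, ∀ t ∈ Set.Ioo (t1 - ε) (t1 + ε), t ≠ t1 → h t1 < h t) ∧ h t1 < 0) ∧
      (t2 ∈ Set.Ioo R0 R1 ∧ (∀ t : ℝ, 0 < t → t ≠ t2 → h t < h t2) ∧ 0 < h t2) := by
  have hN2 : (2:ℝ) ≤ (N:ℝ) := by exact_mod_cast hN
  have hN0 : (0:ℝ) < (N:ℝ) := by linarith
  have h2s1 : (0:ℝ) < 2 * s1 := by linarith
  have h4s1N : 0 < 4 * s1 / (N:ℝ) := by positivity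
  have hq0 : 0 < q := by linarith
  have hp2 : 2 < p := by linarith
  have hp0 : 0 < p := by linarith
  obtain ⟨β, hβ_def⟩ : ∃ β : ℝ, β = (N:ℝ) * (q - 2) / (2 * s1) := ⟨_, rfl⟩
  obtain ⟨α, hα_def⟩ : ∃ α : ℝ, α = (N:ℝ) * (p - 2) / (2 * s1) := ⟨_, rfl⟩
  rw [← hβ_def, ← hα_def] at hh hA1
  have hβ0 : 0 < β := by
    rw [hβ_def]; apply div_pos (mul_pos hN0 (by linarith)) h2s1
  have hβ2 : β < 2 := by
    rw [hβ_def, div_lt_iff₀ h2s1]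
    have h1 := (lt_div_iff₀ hN0).mp (show q - 2 < 4 * s1 / N by linarith)
    linarith
  have hα2 : 2 < α := by
    rw [hα_def, lt_div_iff₀ h2s1]
    have h1 := (div_lt_iff₀ hN0).mp (show 4 * s1 / N < p - 2 by linarith)
    linarith
  have hαβ : β < α := by linarith
  have hαβ0 : (0:ℝ) < α - β := by linarith
  have hNq : (N:ℝ) * (q - 2) = 2 * s1 * β := by
    rw [hβ_def]; field_simp
  have hNp : (N:ℝ) * (p - 2) = 2 * s1 * α := by
    rw [hα_def]; field_simp
  have hpq : (N:ℝ) * (p - q) = 2 * s1 * (α - β) := by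
    rw [show (N:ℝ) * (p - q) = N * (p - 2) - N * (q - 2) by ring, hNp, hNq]; ring
  have E1 : 4 * s1 - (N:ℝ) * (q - 2) = 2 * s1 * (2 - β) := by rw [hNq]; ring
  have E2 : (N:ℝ) * (p - 2) - 4 * s1 = 2 * s1 * (α - 2) := by rw [hNp]; ring
  have E3 : (4 * s1 - (N:ℝ) * (q - 2)) / ((N:ℝ) * (p - 2) - 4 * s1) = (2 - β) / (α - 2) := by
    rw [E1, E2, mul_div_mul_left _ _ h2s1.ne']
  have E4 : p * (4 * s1 - (N:ℝ) * (q - 2)) / (2 * (N:ℝ) * Cp * (p - q))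
      = p * (2 - β) / (2 * Cp * (α - β)) := by
    rw [E1, show 2 * (N:ℝ) * Cp * (p - q) = 2 * Cp * ((N:ℝ) * (p - q)) by ring, hpq,
      show p * (2 * s1 * (2 - β)) = 2 * s1 * (p * (2 - β)) by ring,
      show 2 * Cp * (2 * s1 * (α - β)) = 2 * s1 * (2 * Cp * (α - β)) by ring,
      mul_div_mul_left _ _ h2s1.ne']
  have E5 : ((N:ℝ) * (p - 2) - 4 * s1) / (2 * (N:ℝ) * (p - q)) = (α - 2) / (2 * (α - β)) := by
    rw [E2, show 2 * (N:ℝ) * (p - q) = 2 * ((N:ℝ) * (p - q)) by ring, hpq,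
      show 2 * (2 * s1 * (α - β)) = 2 * s1 * (2 * (α - β)) by ring,
      mul_div_mul_left _ _ h2s1.ne']
  rw [E3, E4, E5] at hA1
  -- abbreviations
  obtain ⟨r, hr_def⟩ : ∃ r : ℝ, r = (2 - β) / (α - 2) := ⟨_, rfl⟩
  obtain ⟨X, hX_def⟩ : ∃ X : ℝ, X = p * (2 - β) / (2 * Cp * (α - β)) := ⟨_, rfl⟩
  obtain ⟨W, hW_def⟩ : ∃ W : ℝ, W = (a ^ (p - α)) ^ r := ⟨_, rfl⟩
  rw [← hr_def, ← hX_def] at hA1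
  have hapα : 0 < a ^ (p - α) := Real.rpow_pos_of_pos ha _
  have haqβ : 0 < a ^ (q - β) := Real.rpow_pos_of_pos ha _
  have hW : 0 < W := by rw [hW_def]; exact Real.rpow_pos_of_pos hapα _
  have hX0 : 0 < X := by
    rw [hX_def]; apply div_pos (mul_pos hp0 (by linarith)) (by positivity)
  have i1 : a ^ (q - β + (p - α) * r) = a ^ (q - β) * W := by
    rw [Real.rpow_add ha, Real.rpow_mul ha.le, hW_def]
  rw [i1] at hA1
  -- the condition for key_lemma
  have i2 : (2 - β) / (2 * (Cp / p * a ^ (p - α)) * (α - β)) = X * (a ^ (p - α))⁻¹ := by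
    rw [hX_def]
    field_simp
  have hcond : μ * Cq / q * a ^ (q - β) < (α - 2) / (2 * (α - β)) *
      ((2 - β) / (2 * (Cp / p * a ^ (p - α)) * (α - β))) ^ ((2 - β) / (α - 2)) := by
    rw [i2, ← hr_def, Real.mul_rpow hX0.le (inv_nonneg.mpr hapα.le),
      Real.inv_rpow hapα.le, ← hW_def]
    have hfac : 0 < Cq / q * W⁻¹ := mul_pos (div_pos hCq hq0) (inv_pos.mpr hW)
    have hmul := mul_lt_mul_of_pos_right hA1 hfac
    calc μ * Cq / q * a ^ (q - β)
        = (μ * (a ^ (q - β) * W)) * (Cq / q * W⁻¹) := by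
          field_simp
      _ < (X ^ r * ((α - 2) / (2 * (α - β))) * (q / Cq)) * (Cq / q * W⁻¹) := hmul
      _ = (α - 2) / (2 * (α - β)) * (X ^ r * W⁻¹) := by
          field_simp
  exact key_lemma α β (Cp / p * a ^ (p - α)) (μ * Cq / q * a ^ (q - β)) hβ0 hβ2 hα2
    (mul_pos (div_pos hCp hp0) hapα) (mul_pos (div_pos (mul_pos hμ hCq) hq0) haqβ)
    hcond h hh
end

section
/- Let N ≥ 2 be an integer, 0 < s2 < s1 < 1 with N > 2·s1, and let p, q be reals with 2 < q < 2 + 4·s2/N and 2 + 4·s1/N < p < 2N/(N − 2·s1). Set κp = N(p−2)/(2p) and κq = N(q−2)/(2q). Let a, μ, Cp, Cq > 0 satisfy condition (A2): a^{(2q·s1 − N(q−2))/(4s1 − N(q−2)) + (2p·s1 − N(p−2))/(N(p−2) − 4s1)} · μ^{2s1/(4s1 − N(q−2))} < ( s1·(p·κp − 2s1) / (Cq·κq·(p·κp − q·κq)) )^{2s1/(4s1 − N(q−2))} · ( s1·(2s1 − q·κq) / (Cp·κp·(p·κp − q·κq)) )^{2s1/(N(p−2) − 4s1)}. Then there exist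 no real numbers X > 0, Y ≥ 0, P ≥ 0, Q ≥ 0 satisfying simultaneously: s1·(p·κp − 2s1)·X + s2·(p·κp − 2s2)·Y = μ·κq·(p·κp − q·κq)·Q; s1·(2s1 − q·κq)·X + s2·(2s2 − q·κq)·Y = κp·(p·κp − q·κq)·P; Q ≤ Cq · a^{q − N(q−2)/(2s1)} · X^{N(q−2)/(4s1)}; and P ≤ Cp · a^{p − N(p−2)/(2s1)} · X^{N(p−2)/(4s1)}. -/
open Real

set_option maxHeartbeats 1000000

theorem stmt3
    (N : ℕ) (hN : 2 ≤ N) (s1 s2 : ℝ) (hs2 : 0 < s2) (hs21 : s2 < s1) (hs1 : s1 < 1)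
    (hNs1 : 2 * s1 < (N : ℝ))
    (p q : ℝ) (hq : 2 < q) (hq' : q < 2 + 4 * s2 / N)
    (hp : 2 + 4 * s1 / N < p) (hp' : p < 2 * N / (N - 2 * s1))
    (κp κq : ℝ) (hκp : κp = N * (p - 2) / (2 * p)) (hκq : κq = N * (q - 2) / (2 * q))
    (a μ Cp Cq : ℝ) (ha : 0 < a) (hμ : 0 < μ) (hCp : 0 < Cp) (hCq : 0 < Cq)
    (hA2 : a ^ ((2 * q * s1 - N * (q - 2)) / (4 * s1 - N * (q - 2)) +
          (2 * p * s1 - N * (p - 2)) / (N * (p - 2) - 4 * s1)) *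
        μ ^ (2 * s1 / (4 * s1 - N * (q - 2)))
      < (s1 * (p * κp - 2 * s1) / (Cq * κq * (p * κp - q * κq))) ^
          (2 * s1 / (4 * s1 - N * (q - 2))) *
        (s1 * (2 * s1 - q * κq) / (Cp * κp * (p * κp - q * κq))) ^
          (2 * s1 / (N * (p - 2) - 4 * s1))) :
    ¬ ∃ X Y P Q : ℝ, 0 < X ∧ 0 ≤ Y ∧ 0 ≤ P ∧ 0 ≤ Q ∧
      s1 * (p * κp - 2 * s1) * X + s2 * (p * κp - 2 * s2) * Y
        = μ * κq * (p * κp - q * κq) * Q ∧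
      s1 * (2 * s1 - q * κq) * X + s2 * (2 * s2 - q * κq) * Y
        = κp * (p * κp - q * κq) * P ∧
      Q ≤ Cq * a ^ (q - N * (q - 2) / (2 * s1)) * X ^ (N * (q - 2) / (4 * s1)) ∧
      P ≤ Cp * a ^ (p - N * (p - 2) / (2 * s1)) * X ^ (N * (p - 2) / (4 * s1)) := by
  rintro ⟨X, Y, P, Q, hX, hY, hP, hQ, e1, e2, iQ, iP⟩
  have hs1pos : 0 < s1 := lt_trans hs2 hs21
  have hN0 : (0:ℝ) < N := by positivity
  have hq2 : (0:ℝ) < q - 2 := by linarith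
  have hp2 : (0:ℝ) < p - 2 := by
    have : 0 < 4 * s1 / N := by positivity
    linarith
  have hNq : (N:ℝ) * (q - 2) < 4 * s2 := by
    have := (sub_lt_iff_lt_add'.mpr hq')
    have h : q - 2 < 4 * s2 / N := by linarith
    calc (N:ℝ) * (q - 2) < N * (4 * s2 / N) := by
          exact (mul_lt_mul_iff_right₀ hN0).mpr h
      _ = 4 * s2 := by field_simp
  have hNp : 4 * s1 < (N:ℝ) * (p - 2) := by
    have h : 4 * s1 / N < p - 2 := by linarith
    calc 4 * s1 = (N:ℝ) * (4 * s1 / N) := by field_simp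
      _ < N * (p - 2) := (mul_lt_mul_iff_right₀ hN0).mpr h
  have hqk : q * κq = N * (q - 2) / 2 := by
    rw [hκq]; field_simp
  have hpk : p * κp = N * (p - 2) / 2 := by
    have hp0 : p ≠ 0 := by
      have : (0:ℝ) < 4 * s1 / N := by positivity
      have : (0:ℝ) < p := by linarith
      exact ne_of_gt this
    rw [hκp]; field_simp
  have hκqpos : 0 < κq := by rw [hκq]; positivity
  have hκppos : 0 < κp := by
    rw [hκp]
    have hp0 : (0:ℝ) < p := by linarith
    positivity
  have h1 : q * κq < 2 * s2 := by rw [hqk]; linarith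
  have h2 : 2 * s1 < p * κp := by rw [hpk]; linarith
  have h3 : q * κq < 2 * s1 := by linarith
  have h4 : q * κq < p * κp := by linarith
  have hqκq0 : 0 < q * κq := by rw [hqk]; positivity
  have hd1 : 0 < 4 * s1 - (N:ℝ) * (q - 2) := by linarith
  have hd2 : 0 < (N:ℝ) * (p - 2) - 4 * s1 := by linarith
  -- abbreviations
  set A : ℝ := (N:ℝ) * (q - 2) / (4 * s1) with hA
  set B : ℝ := (N:ℝ) * (p - 2) / (4 * s1) with hB
  set θq : ℝ := q - (N:ℝ) * (q - 2) / (2 * s1) with hθq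
  set θp : ℝ := p - (N:ℝ) * (p - 2) / (2 * s1) with hθp
  set u : ℝ := 2 * s1 / (4 * s1 - (N:ℝ) * (q - 2)) with hu
  set v : ℝ := 2 * s1 / ((N:ℝ) * (p - 2) - 4 * s1) with hv
  have hupos : 0 < u := by positivity
  have hvpos : 0 < v := by positivity
  set R1 : ℝ := s1 * (p * κp - 2 * s1) / (Cq * κq * (p * κp - q * κq)) with hR1
  set R2 : ℝ := s1 * (2 * s1 - q * κq) / (Cp * κp * (p * κp - q * κq)) with hR2
  have hR1pos : 0 < R1 := by
    rw [hR1]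
    have : 0 < p * κp - 2 * s1 := by linarith
    have : 0 < p * κp - q * κq := by linarith
    positivity
  have hR2pos : 0 < R2 := by
    rw [hR2]
    have : 0 < 2 * s1 - q * κq := by linarith
    have : 0 < p * κp - q * κq := by linarith
    positivity
  set K1 : ℝ := μ * κq * (p * κp - q * κq) * Cq * a ^ θq / (s1 * (p * κp - 2 * s1)) with hK1
  set L : ℝ := s1 * (2 * s1 - q * κq) / (κp * (p * κp - q * κq) * Cp * a ^ θp) with hL
  have haθq : (0:ℝ) < a ^ θq := rpow_pos_of_pos ha _
  have haθp : (0:ℝ) < a ^ θp := rpow_pos_of_pos ha _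
  have hC1 : 0 < s1 * (p * κp - 2 * s1) := by
    have : 0 < p * κp - 2 * s1 := by linarith
    positivity
  have hC2 : 0 < s1 * (2 * s1 - q * κq) := by
    have : 0 < 2 * s1 - q * κq := by linarith
    positivity
  have hD1 : 0 < μ * κq * (p * κp - q * κq) * Cq * a ^ θq := by
    have : 0 < p * κp - q * κq := by linarith
    positivity
  have hD2 : 0 < κp * (p * κp - q * κq) * Cp * a ^ θp := by
    have : 0 < p * κp - q * κq := by linarith
    positivity
  have hK1pos : 0 < K1 := div_pos hD1 hC1
  have hLpos : 0 < L := div_pos hC2 hD2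
  have hXA : (0:ℝ) < X ^ A := rpow_pos_of_pos hX A
  -- Step 1 : X ^ (1 - A) ≤ K1
  have step1 : X ^ (1 - A) ≤ K1 := by
    have hμκ : 0 ≤ μ * κq * (p * κp - q * κq) := by
      have : 0 < p * κp - q * κq := by linarith
      positivity
    have hYnn : 0 ≤ s2 * (p * κp - 2 * s2) * Y := by
      have : 0 < p * κp - 2 * s2 := by linarith
      positivity
    have key : s1 * (p * κp - 2 * s1) * X
        ≤ μ * κq * (p * κp - q * κq) * Cq * a ^ θq * X ^ A := by
      calc s1 * (p * κp - 2 * s1) * X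
          ≤ s1 * (p * κp - 2 * s1) * X + s2 * (p * κp - 2 * s2) * Y := by linarith
        _ = μ * κq * (p * κp - q * κq) * Q := e1
        _ ≤ μ * κq * (p * κp - q * κq) * (Cq * a ^ θq * X ^ A) :=
            mul_le_mul_of_nonneg_left iQ hμκ
        _ = μ * κq * (p * κp - q * κq) * Cq * a ^ θq * X ^ A := by ring
    have hXsplit : X ^ (1 - A) * X ^ A = X := by
      rw [← rpow_add hX, sub_add_cancel, rpow_one]
    have key2 : s1 * (p * κp - 2 * s1) * X ^ (1 - A) * X ^ A
        ≤ μ * κq * (p * κp - q * κq) * Cq * a ^ θq * X ^ A := by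
      rw [mul_assoc, hXsplit]; exact key
    have key3 := (mul_le_mul_iff_left₀ hXA).mp key2
    rw [hK1, le_div_iff₀ hC1]
    linarith
  -- Step 2 : L ≤ X ^ (B - 1)
  have step2 : L ≤ X ^ (B - 1) := by
    have hκ : 0 ≤ κp * (p * κp - q * κq) := by
      have : 0 < p * κp - q * κq := by linarith
      positivity
    have hYnn : 0 ≤ s2 * (2 * s2 - q * κq) * Y := by
      have : 0 < 2 * s2 - q * κq := by linarith
      positivity
    have key : s1 * (2 * s1 - q * κq) * X
        ≤ κp * (p * κp - q * κq) * Cp * a ^ θp * X ^ B := by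
      calc s1 * (2 * s1 - q * κq) * X
          ≤ s1 * (2 * s1 - q * κq) * X + s2 * (2 * s2 - q * κq) * Y := by linarith
        _ = κp * (p * κp - q * κq) * P := e2
        _ ≤ κp * (p * κp - q * κq) * (Cp * a ^ θp * X ^ B) :=
            mul_le_mul_of_nonneg_left iP hκ
        _ = κp * (p * κp - q * κq) * Cp * a ^ θp * X ^ B := by ring
    have hXsplit : X ^ (B - 1) * X ^ (1:ℝ) = X ^ B := by
      rw [← rpow_add hX, sub_add_cancel]
    have hprod : κp * (p * κp - q * κq) * Cp * a ^ θp * X ^ (B - 1) * X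
        = κp * (p * κp - q * κq) * Cp * a ^ θp * X ^ B := by
      rw [← hXsplit, rpow_one]; ring
    have key2 : s1 * (2 * s1 - q * κq) * X
        ≤ κp * (p * κp - q * κq) * Cp * a ^ θp * X ^ (B - 1) * X := by
      rw [hprod]; exact key
    have key3 := (mul_le_mul_iff_left₀ hX).mp key2
    rw [hL, div_le_iff₀ hD2]
    linarith
  -- Step 3 : L ^ v ≤ K1 ^ u
  have e1u : (1 - A) * u = 1 / 2 := by
    rw [hA, hu]
    have hs1ne : s1 ≠ 0 := ne_of_gt hs1pos
    have hd1ne : 4 * s1 - (N:ℝ) * (q - 2) ≠ 0 := ne_of_gt hd1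
    field_simp
    ring
  have e2v : (B - 1) * v = 1 / 2 := by
    rw [hB, hv]
    have hs1ne : s1 ≠ 0 := ne_of_gt hs1pos
    have hd2ne : (N:ℝ) * (p - 2) - 4 * s1 ≠ 0 := ne_of_gt hd2
    field_simp
    ring
  have hLK : L ^ v ≤ K1 ^ u := by
    have t1 : X ^ ((1:ℝ)/2) ≤ K1 ^ u := by
      have h := rpow_le_rpow (rpow_pos_of_pos hX (1 - A)).le step1 hupos.le
      rwa [← rpow_mul hX.le, e1u] at h
    have t2 : L ^ v ≤ X ^ ((1:ℝ)/2) := by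
      have h := rpow_le_rpow hLpos.le step2 hvpos.le
      rwa [← rpow_mul hX.le, e2v] at h
    exact le_trans t2 t1
  -- Step 4 : from hA2, K1 ^ u < L ^ v
  have hExp : (2 * q * s1 - (N:ℝ) * (q - 2)) / (4 * s1 - N * (q - 2)) +
      (2 * p * s1 - N * (p - 2)) / (N * (p - 2) - 4 * s1) = θq * u + θp * v := by
    rw [hθq, hθp, hu, hv]
    have hs1ne : s1 ≠ 0 := ne_of_gt hs1pos
    have hd1ne : 4 * s1 - (N:ℝ) * (q - 2) ≠ 0 := ne_of_gt hd1
    have hd2ne : (N:ℝ) * (p - 2) - 4 * s1 ≠ 0 := ne_of_gt hd2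
    field_simp
  have hA2' : (a ^ θq) ^ u * (a ^ θp) ^ v * μ ^ u < R1 ^ u * R2 ^ v := by
    have h : a ^ (θq * u + θp * v) = (a ^ θq) ^ u * (a ^ θp) ^ v := by
      rw [rpow_add ha, rpow_mul ha.le, rpow_mul ha.le]
    rw [hExp, h] at hA2
    calc (a ^ θq) ^ u * (a ^ θp) ^ v * μ ^ u
        = (a ^ θq) ^ u * (a ^ θp) ^ v * μ ^ u := rfl
      _ < R1 ^ u * R2 ^ v := hA2
  have hK1eq : K1 = a ^ θq * μ / R1 := by
    rw [hK1, hR1]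
    have h5 : p * κp - q * κq ≠ 0 := by
      have : 0 < p * κp - q * κq := by linarith
      exact ne_of_gt this
    have h6 : p * κp - 2 * s1 ≠ 0 := by
      have : 0 < p * κp - 2 * s1 := by linarith
      exact ne_of_gt this
    have hs1ne : s1 ≠ 0 := ne_of_gt hs1pos
    have hκqne : κq ≠ 0 := ne_of_gt hκqpos
    have hCqne : Cq ≠ 0 := ne_of_gt hCq
    field_simp
  have hLeq : L = R2 / a ^ θp := by
    have h5 : p * κp - q * κq ≠ 0 := by
      have : 0 < p * κp - q * κq := by linarith
      exact ne_of_gt this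
    have hκpne : κp ≠ 0 := ne_of_gt hκppos
    have hCpne : Cp ≠ 0 := ne_of_gt hCp
    have haθpne : a ^ θp ≠ 0 := ne_of_gt haθp
    rw [hL, hR2, div_div]
    ring_nf
  have hKL : K1 ^ u < L ^ v := by
    rw [hK1eq, hLeq]
    rw [div_rpow (by positivity) (le_of_lt hR1pos), div_rpow (le_of_lt hR2pos) (le_of_lt haθp),
      mul_rpow haθq.le hμ.le]
    rw [div_lt_div_iff₀ (rpow_pos_of_pos hR1pos u) (rpow_pos_of_pos haθp v)]
    calc (a ^ θq) ^ u * μ ^ u * (a ^ θp) ^ v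
        = (a ^ θq) ^ u * (a ^ θp) ^ v * μ ^ u := by ring
      _ < R1 ^ u * R2 ^ v := hA2'
      _ = R2 ^ v * R1 ^ u := by ring
  linarith
end

section
/- Let A, B, C, D > 0 and let d, b, a, c be real numbers with 0 < d < b < a < c. Define f : ℝ → ℝ by f(t) = A·e^{a t} + B·e^{b t} − C·e^{c t} − D·e^{d t}, and suppose there exists t₀ ∈ ℝ with f(t₀) > 0. Then: (i) f has exactly two critical points ξ < τ; (ii) ξ is a strict local minimum point of f with f(ξ) < 0, and τ is the strict global maximum point of f with f(τ) = max_{t∈ℝ} f(t) > 0; (iii) f has exactly two zeros c₀ < d₀, and they interlace as ξ < c₀ < τ < d₀; (iv) f is strictly decreasing and concave on (τ, ∞) (in particular f'(t) < 0 and f''(t) ≤ 0 for t > τ). -/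
open Real Set

lemma exp_small' (X Y γ : ℝ) (hX : 0 < X) (hY : 0 < Y) (hγ : 0 < γ) :
    ∃ S : ℝ, ∀ t ≤ S, Y * Real.exp (γ * t) < X := by
  refine ⟨Real.log (X / Y) / γ - 1, fun t ht => ?_⟩
  have h1 : γ * t < Real.log (X / Y) := by
    have h2 := mul_le_mul_of_nonneg_left ht hγ.le
    have h3 : γ * (Real.log (X / Y) / γ - 1) = Real.log (X / Y) - γ := by
      field_simp
    nlinarith
  have h2 : Real.exp (γ * t) < X / Y := by
    calc Real.exp (γ * t) < Real.exp (Real.log (X / Y)) := Real.exp_lt_exp.2 h1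
    _ = X / Y := Real.exp_log (div_pos hX hY)
  calc Y * Real.exp (γ * t) < Y * (X / Y) := by nlinarith [Real.exp_pos (γ * t)]
  _ = X := by field_simp

lemma exp_big' (X Y γ : ℝ) (hY : 0 < Y) (hγ : 0 < γ) :
    ∃ T : ℝ, ∀ t, T ≤ t → X < Y * Real.exp (γ * t) := by
  set X' : ℝ := max X 1 with hX'
  have hX'pos : 0 < X' := lt_of_lt_of_le one_pos (le_max_right _ _)
  have hXX' : X ≤ X' := le_max_left _ _
  refine ⟨Real.log (X' / Y) / γ + 1, fun t ht => ?_⟩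
  have h1 : Real.log (X' / Y) < γ * t := by
    have h2 := mul_le_mul_of_nonneg_left ht hγ.le
    have h3 : γ * (Real.log (X' / Y) / γ + 1) = Real.log (X' / Y) + γ := by
      field_simp
    nlinarith
  have h2 : X' / Y < Real.exp (γ * t) := by
    calc X' / Y = Real.exp (Real.log (X' / Y)) := (Real.exp_log (div_pos hX'pos hY)).symm
    _ < Real.exp (γ * t) := Real.exp_lt_exp.2 h1
  have : X' < Y * Real.exp (γ * t) := by
    rw [div_lt_iff₀ hY] at h2; nlinarith
  linarith

lemma hasDeriv4 (A B C D a b c d t : ℝ) :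
    HasDerivAt (fun t => A * Real.exp (a*t) + B * Real.exp (b*t)
        - C * Real.exp (c*t) - D * Real.exp (d*t))
      (a*A*Real.exp (a*t) + b*B*Real.exp (b*t) - c*C*Real.exp (c*t) - d*D*Real.exp (d*t)) t := by
  have h : ∀ E e : ℝ, HasDerivAt (fun t => E * Real.exp (e*t)) (e*E*Real.exp (e*t)) t := by
    intro E e
    have h1 : HasDerivAt (fun y => E * Real.exp (e * y)) (E * (Real.exp (e * t) * (e * 1))) t :=
      ((hasDerivAt_id t).const_mul e).exp.const_mul E
    convert h1 using 1
    ring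
  exact (((h A a).add (h B b)).sub (h C c)).sub (h D d)

lemma cross (K L M α β : ℝ) (hK : 0 < K) (hL : 0 < L) (hM : 0 < M)
    (hα : 0 < α) (hαβ : α < β) :
    ∃ s : ℝ, (∀ t, t < s → 0 < K + L * Real.exp (α*t) - M * Real.exp (β*t)) ∧
      K + L * Real.exp (α*s) - M * Real.exp (β*s) = 0 ∧
      ∀ t, s < t → K + L * Real.exp (α*t) - M * Real.exp (β*t) < 0 := by
  set Q : ℝ → ℝ := fun t => K + L * Real.exp (α*t) - M * Real.exp (β*t) with hQdef
  have key : ∀ u v, u < v → Q u ≤ 0 → Q v < 0 := by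
    intro u v huv h
    have hM' : K + L * Real.exp (α*u) ≤ M * Real.exp (β*u) := by
      have : Q u = K + L * Real.exp (α*u) - M * Real.exp (β*u) := rfl
      linarith [this ▸ h]
    have e1 : Real.exp (β*v) = Real.exp (β*u) * Real.exp (β*(v-u)) := by
      rw [← Real.exp_add]; ring_nf
    have e2 : Real.exp (α*v) = Real.exp (α*u) * Real.exp (α*(v-u)) := by
      rw [← Real.exp_add]; ring_nf
    have h3 : (1:ℝ) < Real.exp (β*(v-u)) := by
      calc (1:ℝ) = Real.exp 0 := Real.exp_zero.symm
      _ < Real.exp (β*(v-u)) := Real.exp_lt_exp.2 (by nlinarith)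
    have h4 : Real.exp (α*(v-u)) < Real.exp (β*(v-u)) := Real.exp_lt_exp.2 (by nlinarith)
    have h5 : (K + L * Real.exp (α*u)) * Real.exp (β*(v-u)) ≤ M * Real.exp (β*v) := by
      rw [e1]; nlinarith [Real.exp_pos (β*(v-u))]
    have hQv : Q v = K + L * Real.exp (α*u) * Real.exp (α*(v-u)) - M * Real.exp (β*v) := by
      simp only [hQdef]; rw [e2]; ring
    nlinarith [Real.exp_pos (α*u), mul_pos hL (Real.exp_pos (α*u))]
  obtain ⟨S, hS⟩ := exp_small' K M β hK hM (by linarith)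
  obtain ⟨T, hT⟩ := exp_big' (K + L) M (β - α) hM (by linarith)
  set tp : ℝ := max T 0 with htpdef
  set tm : ℝ := min S tp with htmdef
  have hQpos : 0 < Q tm := by
    have h1 := hS tm (min_le_left _ _)
    have := Real.exp_pos (α * tm)
    simp only [hQdef]; nlinarith
  have hQneg : Q tp < 0 := by
    have h1 := hT tp (le_max_left _ _)
    have h2 : (1:ℝ) ≤ Real.exp (α * tp) := by
      rw [show (1:ℝ) = Real.exp 0 from Real.exp_zero.symm]
      exact Real.exp_le_exp.2 (by nlinarith [le_max_right T (0:ℝ)])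
    have e3 : Real.exp (β * tp) = Real.exp ((β-α) * tp) * Real.exp (α * tp) := by
      rw [← Real.exp_add]; ring_nf
    have h3 : (K + L) * Real.exp (α * tp) < M * Real.exp (β * tp) := by
      rw [e3]; nlinarith [Real.exp_pos (α * tp)]
    simp only [hQdef]
    nlinarith [Real.exp_pos (α * tp)]
  have hcont : Continuous Q := by
    simp only [hQdef]; fun_prop
  have h0mem : (0:ℝ) ∈ Icc (Q tp) (Q tm) := ⟨hQneg.le, hQpos.le⟩
  obtain ⟨s, hsmem, hs0⟩ := intermediate_value_Icc' (min_le_right S tp) hcont.continuousOn h0mem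
  refine ⟨s, fun t ht => ?_, hs0, fun t ht => key s t ht hs0.le⟩
  by_contra hc
  push_neg at hc
  have := key t s ht hc
  rw [hs0] at this
  exact lt_irrefl 0 this

theorem stmt6
    (A B C D : ℝ) (hA : 0 < A) (hB : 0 < B) (hC : 0 < C) (hD : 0 < D)
    (d b a c : ℝ) (hd : 0 < d) (hdb : d < b) (hba : b < a) (hac : a < c)
    (f : ℝ → ℝ)
    (hf : ∀ t : ℝ, f t = A * Real.exp (a * t) + B * Real.exp (b * t)
        - C * Real.exp (c * t) - D * Real.exp (d * t))
    (t₀ : ℝ) (ht₀ : 0 < f t₀) :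
    ∃ ξ τ c₀ d₀ : ℝ, ξ < τ ∧
      -- (i) exactly two critical points
      deriv f ξ = 0 ∧ deriv f τ = 0 ∧ (∀ t : ℝ, deriv f t = 0 → t = ξ ∨ t = τ) ∧
      -- (ii) ξ strict local min with f ξ < 0, τ strict global max with f τ > 0
      (∃ ε > 0, ∀ t ∈ Set.Ioo (ξ - ε) (ξ + ε), t ≠ ξ → f ξ < f t) ∧ f ξ < 0 ∧
      (∀ t : ℝ, t ≠ τ → f t < f τ) ∧ 0 < f τ ∧
      -- (iii) exactly two zeros, interlacing
      c₀ < d₀ ∧ f c₀ = 0 ∧ f d₀ = 0 ∧ (∀ t : ℝ, f t = 0 → t = c₀ ∨ t = d₀) ∧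
      ξ < c₀ ∧ c₀ < τ ∧ τ < d₀ ∧
      -- (iv) strictly decreasing and concave on (τ, ∞)
      StrictAntiOn f (Set.Ioi τ) ∧ ConcaveOn ℝ (Set.Ioi τ) f ∧
      (∀ t : ℝ, τ < t → deriv f t < 0 ∧ deriv (deriv f) t ≤ 0) := by
  have hfF : f = fun t => A * Real.exp (a*t) + B * Real.exp (b*t)
      - C * Real.exp (c*t) - D * Real.exp (d*t) := funext hf
  set F1 : ℝ → ℝ := fun t => a*A*Real.exp (a*t) + b*B*Real.exp (b*t)
      - c*C*Real.exp (c*t) - d*D*Real.exp (d*t) with hF1def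
  have hfd : ∀ t, HasDerivAt f (F1 t) t := by
    intro t; rw [hfF]; exact hasDeriv4 A B C D a b c d t
  have hderiv : deriv f = F1 := funext fun t => (hfd t).deriv
  have hcont : Continuous f := by rw [hfF]; fun_prop
  set P : ℝ → ℝ := fun t => a*A*Real.exp ((a-d)*t) + b*B*Real.exp ((b-d)*t)
      - c*C*Real.exp ((c-d)*t) - d*D*Real.exp (0*t) with hPdef
  have hPcont : Continuous P := by rw [hPdef]; fun_prop
  have hF1P : ∀ t, F1 t = Real.exp (d*t) * P t := by
    intro t
    have e1 : Real.exp (d*t) * Real.exp ((a-d)*t) = Real.exp (a*t) := by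
      rw [← Real.exp_add]; ring_nf
    have e2 : Real.exp (d*t) * Real.exp ((b-d)*t) = Real.exp (b*t) := by
      rw [← Real.exp_add]; ring_nf
    have e3 : Real.exp (d*t) * Real.exp ((c-d)*t) = Real.exp (c*t) := by
      rw [← Real.exp_add]; ring_nf
    simp only [hF1def, hPdef, zero_mul, Real.exp_zero, mul_one]
    linear_combination (-(a*A))*e1 + (-(b*B))*e2 + (c*C)*e3
  set Q : ℝ → ℝ := fun t => (b-d)*(b*B) + (a-d)*(a*A) * Real.exp ((a-b)*t)
      - (c-d)*(c*C) * Real.exp ((c-b)*t) with hQdef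
  have hPd : ∀ t, HasDerivAt P (Real.exp ((b-d)*t) * Q t) t := by
    intro t
    have h1 := hasDeriv4 (a*A) (b*B) (c*C) (d*D) (a-d) (b-d) (c-d) 0 t
    rw [hPdef]
    convert h1 using 1
    have e1 : Real.exp ((b-d)*t) * Real.exp ((a-b)*t) = Real.exp ((a-d)*t) := by
      rw [← Real.exp_add]; ring_nf
    have e2 : Real.exp ((b-d)*t) * Real.exp ((c-b)*t) = Real.exp ((c-d)*t) := by
      rw [← Real.exp_add]; ring_nf
    simp only [hQdef]
    linear_combination ((a-d)*(a*A))*e1 - ((c-d)*(c*C))*e2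
  have hb0 : (0:ℝ) < b := lt_trans hd hdb
  have ha0 : (0:ℝ) < a := lt_trans hb0 hba
  have hc0 : (0:ℝ) < c := lt_trans ha0 hac
  obtain ⟨s₁, hQpos, hQs₁, hQneg⟩ := cross ((b-d)*(b*B)) ((a-d)*(a*A)) ((c-d)*(c*C))
      (a-b) (c-b) (mul_pos (by linarith) (mul_pos hb0 hB))
      (mul_pos (by linarith) (mul_pos ha0 hA))
      (mul_pos (by linarith) (mul_pos hc0 hC)) (by linarith) (by linarith)
  have hQpos' : ∀ t, t < s₁ → 0 < Q t := fun t ht => by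
    have := hQpos t ht; simp only [hQdef]; linarith
  have hQneg' : ∀ t, s₁ < t → Q t < 0 := fun t ht => by
    have := hQneg t ht; simp only [hQdef]; linarith
  have hPmono : StrictMonoOn P (Iic s₁) := by
    apply strictMonoOn_of_deriv_pos (convex_Iic s₁) hPcont.continuousOn
    intro x hx
    rw [interior_Iic] at hx
    rw [(hPd x).deriv]
    exact mul_pos (Real.exp_pos _) (hQpos' x hx)
  have hPanti : StrictAntiOn P (Ici s₁) := by
    apply strictAntiOn_of_deriv_neg (convex_Ici s₁) hPcont.continuousOn
    intro x hx
    rw [interior_Ici] at hx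
    rw [(hPd x).deriv]
    exact mul_neg_of_pos_of_neg (Real.exp_pos _) (hQneg' x hx)
  -- far left negativity of f
  obtain ⟨Sa, hSa⟩ := exp_small' (D/2) A (a-d) (by linarith) hA (by linarith)
  obtain ⟨Sb, hSb⟩ := exp_small' (D/2) B (b-d) (by linarith) hB (by linarith)
  have hLeftNeg : ∀ t, t ≤ min Sa Sb → f t < 0 := by
    intro t ht
    have h1 : A * Real.exp (a*t) < D/2 * Real.exp (d*t) := by
      have h := hSa t (le_trans ht (min_le_left _ _))
      have e : Real.exp (a*t) = Real.exp ((a-d)*t) * Real.exp (d*t) := by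
        rw [← Real.exp_add]; ring_nf
      rw [e]; nlinarith [Real.exp_pos (d*t)]
    have h2 : B * Real.exp (b*t) < D/2 * Real.exp (d*t) := by
      have h := hSb t (le_trans ht (min_le_right _ _))
      have e : Real.exp (b*t) = Real.exp ((b-d)*t) * Real.exp (d*t) := by
        rw [← Real.exp_add]; ring_nf
      rw [e]; nlinarith [Real.exp_pos (d*t)]
    rw [hf]
    linarith [mul_pos hC (Real.exp_pos (c*t))]
  -- far right negativity of f (a single point beyond t₀)
  obtain ⟨Tr, hTr⟩ := exp_big' (A+B) C (c-a) hC (by linarith)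
  set T₁ : ℝ := max Tr (max 0 (t₀+1)) with hT₁def
  have hT₁t₀ : t₀ < T₁ := by
    have : t₀ + 1 ≤ T₁ := le_trans (le_max_right _ _) (le_max_right _ _)
    linarith
  have hT₁0 : (0:ℝ) ≤ T₁ := le_trans (le_max_left _ _) (le_max_right _ _)
  have hfT₁ : f T₁ < 0 := by
    have h1 := hTr T₁ (le_max_left _ _)
    have h2 : Real.exp (b*T₁) ≤ Real.exp (a*T₁) := Real.exp_le_exp.2 (by nlinarith)
    have e3 : Real.exp (c*T₁) = Real.exp ((c-a)*T₁) * Real.exp (a*T₁) := by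
      rw [← Real.exp_add]; ring_nf
    have h3 : (A + B) * Real.exp (a*T₁) < C * Real.exp (c*T₁) := by
      rw [e3]; nlinarith [Real.exp_pos (a*T₁)]
    have h4 := mul_le_mul_of_nonneg_left h2 hB.le
    rw [hf]
    linarith [mul_pos hD (Real.exp_pos (d*T₁))]
  -- f stays above any fixed negative value far to the left
  have hLow : ∀ y : ℝ, y < 0 → ∃ S, ∀ t ≤ S, y < f t := by
    intro y hy
    obtain ⟨S, hS⟩ := exp_small' (-y) (C+D) d (by linarith) (by linarith) hd
    refine ⟨min S 0, fun t ht => ?_⟩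
    have ht1 : t ≤ S := le_trans ht (min_le_left _ _)
    have ht2 : t ≤ 0 := le_trans ht (min_le_right _ _)
    have h1 := hS t ht1
    have h2 : Real.exp (c*t) ≤ Real.exp (d*t) := Real.exp_le_exp.2 (by nlinarith)
    have h3 : C * Real.exp (c*t) ≤ C * Real.exp (d*t) :=
      mul_le_mul_of_nonneg_left h2 hC.le
    rw [hf]
    linarith [mul_pos hA (Real.exp_pos (a*t)), mul_pos hB (Real.exp_pos (b*t))]
  -- construct τ as max of f on [S₀, T₁]
  set S₀ : ℝ := min (min Sa Sb) (t₀ - 1) with hS₀def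
  have hS₀t₀ : S₀ < t₀ := by
    have : S₀ ≤ t₀ - 1 := min_le_right _ _
    linarith
  have hfS₀ : f S₀ < 0 := hLeftNeg S₀ (min_le_left _ _)
  have hS₀T₁ : S₀ < T₁ := lt_trans hS₀t₀ hT₁t₀
  obtain ⟨τ, hτmem, hτmax⟩ := isCompact_Icc.exists_isMaxOn (s := Icc S₀ T₁)
    ⟨t₀, ⟨hS₀t₀.le, hT₁t₀.le⟩⟩ hcont.continuousOn
  have hfτ : 0 < f τ := lt_of_lt_of_le ht₀ (hτmax ⟨hS₀t₀.le, hT₁t₀.le⟩)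
  have hτIoo : τ ∈ Ioo S₀ T₁ := by
    rcases hτmem with ⟨h1, h2⟩
    constructor
    · rcases lt_or_eq_of_le h1 with h | h
      · exact h
      · exfalso; rw [h] at hfS₀; linarith
    · rcases lt_or_eq_of_le h2 with h | h
      · exact h
      · exfalso; rw [h] at hfτ; linarith
  have hτcrit : deriv f τ = 0 :=
    (hτmax.isLocalMax (Icc_mem_nhds hτIoo.1 hτIoo.2)).deriv_eq_zero
  have hPτ : P τ = 0 := by
    have h1 : F1 τ = 0 := by rw [← hderiv]; exact hτcrit
    rw [hF1P] at h1
    rcases mul_eq_zero.1 h1 with h | h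
    · exact absurd h (Real.exp_ne_zero _)
    · exact h
  -- construct ξ as min of f on [S₃, τ]
  obtain ⟨S₂, hS₂⟩ := hLow (f S₀) hfS₀
  set S₃ : ℝ := min S₂ (S₀ - 1) with hS₃def
  have hS₃S₀ : S₃ < S₀ := by
    have : S₃ ≤ S₀ - 1 := min_le_right _ _
    linarith
  have hfS₃ : f S₀ < f S₃ := hS₂ S₃ (min_le_left _ _)
  have hS₃τ : S₃ < τ := lt_trans hS₃S₀ hτIoo.1
  obtain ⟨ξ, hξmem, hξmin⟩ := isCompact_Icc.exists_isMinOn (s := Icc S₃ τ)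
    ⟨S₀, ⟨hS₃S₀.le, hτIoo.1.le⟩⟩ hcont.continuousOn
  have hfξS₀ : f ξ ≤ f S₀ := hξmin ⟨hS₃S₀.le, hτIoo.1.le⟩
  have hfξneg : f ξ < 0 := lt_of_le_of_lt hfξS₀ hfS₀
  have hξIoo : ξ ∈ Ioo S₃ τ := by
    rcases hξmem with ⟨h1, h2⟩
    constructor
    · rcases lt_or_eq_of_le h1 with h | h
      · exact h
      · exfalso; rw [h] at hfS₃; linarith
    · rcases lt_or_eq_of_le h2 with h | h
      · exact h
      · exfalso; rw [h] at hfξneg; linarith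
  have hξτ : ξ < τ := hξIoo.2
  have hξcrit : deriv f ξ = 0 :=
    (hξmin.isLocalMin (Icc_mem_nhds hξIoo.1 hξIoo.2)).deriv_eq_zero
  have hPξ : P ξ = 0 := by
    have h1 : F1 ξ = 0 := by rw [← hderiv]; exact hξcrit
    rw [hF1P] at h1
    rcases mul_eq_zero.1 h1 with h | h
    · exact absurd h (Real.exp_ne_zero _)
    · exact h
  -- position of s₁
  have hξs₁ : ξ < s₁ := by
    by_contra hcon
    push_neg at hcon
    have := hPanti (mem_Ici.2 hcon) (mem_Ici.2 (by linarith)) hξτ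
    rw [hPξ, hPτ] at this
    exact lt_irrefl 0 this
  have hs₁τ : s₁ < τ := by
    by_contra hcon
    push_neg at hcon
    have := hPmono (mem_Iic.2 (by linarith)) (mem_Iic.2 hcon) hξτ
    rw [hPξ, hPτ] at this
    exact lt_irrefl 0 this
  -- sign of P
  have hPneg1 : ∀ t, t < ξ → P t < 0 := by
    intro t ht
    have := hPmono (mem_Iic.2 (by linarith)) (mem_Iic.2 hξs₁.le) ht
    rwa [hPξ] at this
  have hPpos : ∀ t, ξ < t → t < τ → 0 < P t := by
    intro t ht1 ht2
    rcases le_total t s₁ with h | h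
    · have := hPmono (mem_Iic.2 hξs₁.le) (mem_Iic.2 h) ht1
      rwa [hPξ] at this
    · have := hPanti (mem_Ici.2 h) (mem_Ici.2 (by linarith)) ht2
      rwa [hPτ] at this
  have hPneg2 : ∀ t, τ < t → P t < 0 := by
    intro t ht
    have := hPanti (mem_Ici.2 hs₁τ.le) (mem_Ici.2 (by linarith)) ht
    rwa [hPτ] at this
  -- monotonicity of f
  have hAnti1 : StrictAntiOn f (Iic ξ) := by
    apply strictAntiOn_of_deriv_neg (convex_Iic ξ) hcont.continuousOn
    intro x hx
    rw [interior_Iic] at hx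
    rw [hderiv, hF1P]
    exact mul_neg_of_pos_of_neg (Real.exp_pos _) (hPneg1 x hx)
  have hMono : StrictMonoOn f (Icc ξ τ) := by
    apply strictMonoOn_of_deriv_pos (convex_Icc ξ τ) hcont.continuousOn
    intro x hx
    rw [interior_Icc] at hx
    rw [hderiv, hF1P]
    exact mul_pos (Real.exp_pos _) (hPpos x hx.1 hx.2)
  have hAnti2 : StrictAntiOn f (Ici τ) := by
    apply strictAntiOn_of_deriv_neg (convex_Ici τ) hcont.continuousOn
    intro x hx
    rw [interior_Ici] at hx
    rw [hderiv, hF1P]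
    exact mul_neg_of_pos_of_neg (Real.exp_pos _) (hPneg2 x hx)
  -- f negative on Iic ξ
  have hfnegIic : ∀ t, t ≤ ξ → f t < 0 := by
    intro t ht
    have h1 : min (t-1) (min Sa Sb) ≤ min Sa Sb := min_le_right _ _
    have h2 : min (t-1) (min Sa Sb) < t := by
      have : min (t-1) (min Sa Sb) ≤ t - 1 := min_le_left _ _
      linarith
    have h3 := hLeftNeg _ h1
    have h4 := hAnti1 (mem_Iic.2 (by linarith)) (mem_Iic.2 ht) h2
    linarith
  -- global strict max at τ
  have hGmax : ∀ t, t ≠ τ → f t < f τ := by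
    intro t htne
    rcases lt_trichotomy t τ with h | h | h
    · rcases le_or_gt t ξ with h2 | h2
      · exact lt_trans (hfnegIic t h2) hfτ
      · exact hMono ⟨h2.le, h.le⟩ ⟨hξτ.le, le_rfl⟩ h
    · exact absurd h htne
    · exact hAnti2 (mem_Ici.2 le_rfl) (mem_Ici.2 h.le) h
  -- zeros
  obtain ⟨c₀, hc₀mem, hc₀⟩ := intermediate_value_Ioo hξτ.le hcont.continuousOn
    (⟨hfξneg, hfτ⟩ : (0:ℝ) ∈ Ioo (f ξ) (f τ))
  obtain ⟨d₀, hd₀mem, hd₀⟩ := intermediate_value_Ioo' hτIoo.2.le hcont.continuousOn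
    (⟨hfT₁, hfτ⟩ : (0:ℝ) ∈ Ioo (f T₁) (f τ))
  have hzero_uniq : ∀ t, f t = 0 → t = c₀ ∨ t = d₀ := by
    intro t ht
    rcases le_or_gt t ξ with h | h
    · exact absurd ht (ne_of_lt (hfnegIic t h))
    rcases le_or_gt t τ with h2 | h2
    · left
      exact hMono.injOn ⟨h.le, h2⟩ ⟨hc₀mem.1.le, hc₀mem.2.le⟩ (by rw [ht, hc₀])
    · right
      exact hAnti2.injOn (mem_Ici.2 h2.le) (mem_Ici.2 hd₀mem.1.le) (by rw [ht, hd₀])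
  -- uniqueness of critical points
  have hcrit_uniq : ∀ t, deriv f t = 0 → t = ξ ∨ t = τ := by
    intro t ht
    rw [hderiv] at ht
    have hPt : P t = 0 := by
      rw [hF1P] at ht
      rcases mul_eq_zero.1 ht with h | h
      · exact absurd h (Real.exp_ne_zero _)
      · exact h
    rcases lt_trichotomy t ξ with h | h | h
    · exact absurd hPt (ne_of_lt (hPneg1 t h))
    · exact Or.inl h
    rcases lt_trichotomy t τ with h2 | h2 | h2
    · exact absurd hPt (ne_of_gt (hPpos t h h2))
    · exact Or.inr h2
    · exact absurd hPt (ne_of_lt (hPneg2 t h2))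
  -- second derivative
  set F2 : ℝ → ℝ := fun t => a*(a*A)*Real.exp (a*t) + b*(b*B)*Real.exp (b*t)
      - c*(c*C)*Real.exp (c*t) - d*(d*D)*Real.exp (d*t) with hF2def
  have hF1d : ∀ t, HasDerivAt F1 (F2 t) t := by
    intro t
    rw [hF1def]
    exact hasDeriv4 (a*A) (b*B) (c*C) (d*D) a b c d t
  have hderiv2 : deriv (deriv f) = F2 := by
    rw [hderiv]
    exact funext fun t => (hF1d t).deriv
  have hF2eq : ∀ t, F2 t = Real.exp (b*t) * Q t + d * (Real.exp (d*t) * P t) := by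
    intro t
    have q1 : Real.exp (b*t) * Real.exp ((a-b)*t) = Real.exp (a*t) := by
      rw [← Real.exp_add]; ring_nf
    have q2 : Real.exp (b*t) * Real.exp ((c-b)*t) = Real.exp (c*t) := by
      rw [← Real.exp_add]; ring_nf
    have p1 : Real.exp (d*t) * Real.exp ((a-d)*t) = Real.exp (a*t) := by
      rw [← Real.exp_add]; ring_nf
    have p2 : Real.exp (d*t) * Real.exp ((b-d)*t) = Real.exp (b*t) := by
      rw [← Real.exp_add]; ring_nf
    have p3 : Real.exp (d*t) * Real.exp ((c-d)*t) = Real.exp (c*t) := by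
      rw [← Real.exp_add]; ring_nf
    simp only [hF2def, hQdef, hPdef, zero_mul, Real.exp_zero, mul_one]
    linear_combination (-((a-d)*(a*A)))*q1 + ((c-d)*(c*C))*q2 + (-(d*(a*A)))*p1
      + (-(d*(b*B)))*p2 + (d*(c*C))*p3
  have hF2neg : ∀ t, τ < t → F2 t < 0 := by
    intro t ht
    rw [hF2eq]
    have h1 : Q t < 0 := hQneg' t (by linarith)
    have h2 : P t < 0 := hPneg2 t ht
    have h3 := mul_neg_of_pos_of_neg (Real.exp_pos (b*t)) h1
    have h4 := mul_neg_of_pos_of_neg (Real.exp_pos (d*t)) h2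
    have h5 := mul_neg_of_pos_of_neg hd h4
    linarith
  -- assemble
  refine ⟨ξ, τ, c₀, d₀, hξτ, hξcrit, hτcrit, hcrit_uniq, ?_, hfξneg, hGmax, hfτ,
    lt_trans hc₀mem.2 hd₀mem.1, hc₀, hd₀, hzero_uniq, hc₀mem.1, hc₀mem.2, hd₀mem.1,
    ?_, ?_, ?_⟩
  · -- strict local min
    refine ⟨τ - ξ, by linarith, fun t htmem htne => ?_⟩
    rcases lt_or_gt_of_ne htne with h | h
    · exact hAnti1 (mem_Iic.2 h.le) (mem_Iic.2 le_rfl) h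
    · have ht2 : t ≤ τ := by
        have := htmem.2
        linarith
      exact hMono ⟨le_rfl, hξτ.le⟩ ⟨h.le, ht2⟩ h
  · -- strict anti on Ioi τ
    intro x hx y hy hxy
    exact hAnti2 (mem_Ici.2 (le_of_lt hx)) (mem_Ici.2 (le_of_lt hy)) hxy
  · -- concave
    apply concaveOn_of_deriv2_nonpos (convex_Ioi τ) hcont.continuousOn
    · intro x _
      exact ((hfd x).differentiableAt).differentiableWithinAt
    · intro x _
      rw [hderiv]
      exact ((hF1d x).differentiableAt).differentiableWithinAt
    · intro x hx
      rw [interior_Ioi] at hx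
      have h1 : deriv^[2] f x = deriv (deriv f) x := rfl
      rw [h1, hderiv2]
      exact (hF2neg x hx).le
  · intro t ht
    constructor
    · rw [hderiv, hF1P]
      exact mul_neg_of_pos_of_neg (Real.exp_pos _) (hPneg2 t ht)
    · rw [hderiv2]
      exact (hF2neg t ht).le
end

section
/- Let N ≥ 2 be an integer, 0 < s1 < 1 with N > 2·s1, let q be real with 2 < q < 2 + 4·s1/N, and let μ, Cq, S > 0. Write 2* = 2N/(N − 2·s1). For a > 0 and ρ > 0 define h(a, ρ) = 1/2 − (1/2*)·S^{−2*/2}·ρ^{4s1/(N − 2s1)} − (μ·Cq/q)·a^{(2N − q(N − 2s1))/(2s1)}·ρ^{(N(q−2) − 4s1)/(2s1)}. Then for each a > 0 the function ρ ↦ h(a, ρ) has a unique critical point on (0, ∞), namely ρ_a = A_μ^{(N − 2s1)·2s1 / (N(2q·s1 − N(q−2)))} · a^{(N − 2s1)/N} where A_μ = (μ·Cq·(4s1 − N(q−2))/(2s1·q)) · (N·S^{2*/2}/(2s1)), this critical point is the strict global maximum point, the maximum value has the form h(a, ρ_a) = 1/2 − K_μ·a^{4s1/N} for a constant K_μ >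 0 independent of a, and there exists a₀ = a₀(μ) > 0 (explicitly a₀ = (1/(2K_μ))^{N/(4s1)}) such that max_{ρ>0} h(a, ρ) > 0 if a < a₀, max_{ρ>0} h(a, ρ) = 0 if a = a₀, and max_{ρ>0} h(a, ρ) < 0 if a > a₀. -/
open Real Set

set_option maxHeartbeats 2000000 in
theorem stmt7
    (N : ℕ) (hN : 2 ≤ N) (s1 : ℝ) (hs1 : 0 < s1) (hs1' : s1 < 1)
    (hNs1 : 2 * s1 < (N : ℝ))
    (q : ℝ) (hq : 2 < q) (hq' : q < 2 + 4 * s1 / N)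
    (μ Cq S : ℝ) (hμ : 0 < μ) (hCq : 0 < Cq) (hS : 0 < S)
    (h : ℝ → ℝ → ℝ)
    (hh : ∀ a ρ : ℝ, 0 < a → 0 < ρ → h a ρ = 1 / 2
        - (1 / (2 * N / (N - 2 * s1))) * S ^ (-(2 * N / (N - 2 * s1)) / 2) *
            ρ ^ (4 * s1 / (N - 2 * s1))
        - (μ * Cq / q) * a ^ ((2 * N - q * (N - 2 * s1)) / (2 * s1)) *
            ρ ^ ((N * (q - 2) - 4 * s1) / (2 * s1)))
    (Aμ : ℝ)
    (hAμ : Aμ = (μ * Cq * (4 * s1 - N * (q - 2)) / (2 * s1 * q)) *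
        (N * S ^ ((2 * N / (N - 2 * s1)) / 2) / (2 * s1))) :
    ∃ Kμ : ℝ, 0 < Kμ ∧
      ∀ a : ℝ, 0 < a →
        let ρa : ℝ := Aμ ^ ((N - 2 * s1) * 2 * s1 / (N * (2 * q * s1 - N * (q - 2)))) *
            a ^ ((N - 2 * s1) / N)
        (0 < ρa) ∧
        (∀ ρ : ℝ, 0 < ρ → (deriv (fun r => h a r) ρ = 0 ↔ ρ = ρa)) ∧
        (∀ ρ : ℝ, 0 < ρ → ρ ≠ ρa → h a ρ < h a ρa) ∧
        h a ρa = 1 / 2 - Kμ * a ^ (4 * s1 / N) ∧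
        (a < (1 / (2 * Kμ)) ^ ((N : ℝ) / (4 * s1)) → 0 < h a ρa) ∧
        (a = (1 / (2 * Kμ)) ^ ((N : ℝ) / (4 * s1)) → h a ρa = 0) ∧
        ((1 / (2 * Kμ)) ^ ((N : ℝ) / (4 * s1)) < a → h a ρa < 0) := by
  have hN2 : (2:ℝ) ≤ (N:ℝ) := by exact_mod_cast hN
  have hNpos : (0:ℝ) < N := by linarith
  have hNs : (0:ℝ) < (N:ℝ) - 2 * s1 := by linarith
  have hq2 : (N:ℝ) * (q - 2) < 4 * s1 := by
    have h1 : q - 2 < 4 * s1 / N := by linarith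
    have h2 : (N:ℝ) * (q - 2) < N * (4 * s1 / N) := by
      exact mul_lt_mul_of_pos_left h1 hNpos
    calc (N:ℝ) * (q - 2) < N * (4 * s1 / N) := h2
      _ = 4 * s1 := by field_simp
  have hDpos : (0:ℝ) < 2 * q * s1 - N * (q - 2) := by nlinarith
  have hNne : (N:ℝ) ≠ 0 := ne_of_gt hNpos
  have hs1ne : s1 ≠ 0 := ne_of_gt hs1
  have hNsne : (N:ℝ) - 2 * s1 ≠ 0 := ne_of_gt hNs
  have hqne : q ≠ 0 := by positivity
  have hDne : 2 * q * s1 - (N:ℝ) * (q - 2) ≠ 0 := ne_of_gt hDpos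
  -- abbreviations
  set α : ℝ := 4 * s1 / ((N:ℝ) - 2 * s1) with hαdef
  set β : ℝ := ((N:ℝ) * (q - 2) - 4 * s1) / (2 * s1) with hβdef
  set γ : ℝ := (2 * (N:ℝ) - q * ((N:ℝ) - 2 * s1)) / (2 * s1) with hγdef
  set e1 : ℝ := ((N:ℝ) - 2 * s1) * 2 * s1 / ((N:ℝ) * (2 * q * s1 - (N:ℝ) * (q - 2))) with he1def
  set e2 : ℝ := ((N:ℝ) - 2 * s1) / (N:ℝ) with he2def
  set T : ℝ := S ^ (2 * (N:ℝ) / ((N:ℝ) - 2 * s1) / 2) with hTdef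
  have hTpos : 0 < T := by rw [hTdef]; exact Real.rpow_pos_of_pos hS _
  have hTne : T ≠ 0 := ne_of_gt hTpos
  set B : ℝ := 1 / (2 * (N:ℝ) / ((N:ℝ) - 2 * s1)) * T⁻¹ with hBdef
  have hBpos : 0 < B := by
    rw [hBdef]; positivity
  have hα : 0 < α := by rw [hαdef]; positivity
  have hβneg : β < 0 := by
    rw [hβdef]; exact div_neg_of_neg_of_pos (by linarith) (by linarith)
  have hβne : β ≠ 0 := ne_of_lt hβneg
  have hαβ : 0 < α - β := by linarith
  have hαβne : α - β ≠ 0 := ne_of_gt hαβ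
  have hAμpos : 0 < Aμ := by
    rw [hAμ]
    apply mul_pos
    · apply div_pos (mul_pos (mul_pos hμ hCq) (by linarith)) (by positivity)
    · apply div_pos (by positivity) (by positivity)
  have hSneg : S ^ (-(2 * (N:ℝ) / ((N:ℝ) - 2 * s1)) / 2) = T⁻¹ := by
    rw [hTdef, neg_div, Real.rpow_neg hS.le]
  -- exponent identities
  have he1αβ : e1 * (α - β) = 1 := by
    rw [he1def, hαdef, hβdef]
    rw [div_sub_div _ _ hNsne (mul_ne_zero two_ne_zero hs1ne), div_mul_div_comm,
      div_eq_one_iff_eq (mul_ne_zero (mul_ne_zero hNne hDne) (mul_ne_zero hNsne (mul_ne_zero two_ne_zero hs1ne)))]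
    ring
  have he2αβ : e2 * (α - β) = γ := by
    rw [he2def, hαdef, hβdef, hγdef]
    field_simp
    ring
  have he1' : e1 = 1 / (α - β) := by
    rw [eq_div_iff hαβne]; exact he1αβ
  have he1α : e1 * α = α / (α - β) := by rw [he1']; ring
  have he2α : e2 * α = 4 * s1 / (N:ℝ) := by
    rw [he2def, hαdef]
    field_simp
  have hBαAμ : B * α * Aμ = (-β) * (μ * Cq / q) := by
    rw [hBdef, hαdef, hβdef, hAμ]
    field_simp
    ring
  set Kμ : ℝ := B * (1 - α / β) * Aμ ^ (α / (α - β)) with hKμdef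
  have hKμpos : 0 < Kμ := by
    rw [hKμdef]
    have h1 : α / β < 0 := div_neg_of_pos_of_neg hα hβneg
    have h2 : 0 < Aμ ^ (α / (α - β)) := Real.rpow_pos_of_pos hAμpos _
    have h3 : (0:ℝ) < 1 - α / β := by linarith
    positivity
  refine ⟨Kμ, hKμpos, ?_⟩
  intro a ha
  intro ρa
  have hρa : ρa = Aμ ^ e1 * a ^ e2 := rfl
  have hρapos : 0 < ρa := by
    rw [hρa]
    exact mul_pos (Real.rpow_pos_of_pos hAμpos _) (Real.rpow_pos_of_pos ha _)
  set C : ℝ := μ * Cq / q * a ^ γ with hCdef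
  have hCpos : 0 < C := by
    rw [hCdef]
    have := Real.rpow_pos_of_pos ha γ
    positivity
  set g : ℝ → ℝ := fun x => 1 / 2 - B * x ^ α - C * x ^ β with hgdef
  have hhg : ∀ ρ : ℝ, 0 < ρ → h a ρ = g ρ := by
    intro ρ hρ
    rw [hh a ρ ha hρ, hSneg]
  have hg' : ∀ ρ : ℝ, 0 < ρ →
      HasDerivAt g (ρ ^ (β - 1) * ((-β) * C - B * α * ρ ^ (α - β))) ρ := by
    intro ρ hρ
    have h1 : HasDerivAt (fun x : ℝ => x ^ α) (α * ρ ^ (α - 1)) ρ :=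
      Real.hasDerivAt_rpow_const (Or.inl (ne_of_gt hρ))
    have h2 : HasDerivAt (fun x : ℝ => x ^ β) (β * ρ ^ (β - 1)) ρ :=
      Real.hasDerivAt_rpow_const (Or.inl (ne_of_gt hρ))
    have hD1 : HasDerivAt g (0 - B * (α * ρ ^ (α - 1)) - C * (β * ρ ^ (β - 1))) ρ :=
      ((hasDerivAt_const ρ ((1:ℝ) / 2)).sub (h1.const_mul B)).sub (h2.const_mul C)
    have hsplit : ρ ^ (α - 1) = ρ ^ (α - β) * ρ ^ (β - 1) := by
      rw [← Real.rpow_add hρ, show α - β + (β - 1) = α - 1 by ring]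
    convert hD1 using 1
    rw [hsplit]; ring
  have hdh : ∀ ρ : ℝ, 0 < ρ →
      deriv (fun r => h a r) ρ = ρ ^ (β - 1) * ((-β) * C - B * α * ρ ^ (α - β)) := by
    intro ρ hρ
    have hev : (fun r => h a r) =ᶠ[nhds ρ] g := by
      filter_upwards [isOpen_Ioi.mem_nhds (Set.mem_Ioi.mpr hρ)] with x hx
      exact hhg x hx
    rw [hev.deriv_eq, (hg' ρ hρ).deriv]
  have hrapow : ρa ^ (α - β) = Aμ * a ^ γ := by
    rw [hρa, Real.mul_rpow (Real.rpow_pos_of_pos hAμpos e1).le (Real.rpow_pos_of_pos ha e2).le,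
      ← Real.rpow_mul hAμpos.le, ← Real.rpow_mul ha.le, he1αβ, he2αβ, Real.rpow_one]
  have hkey : B * α * ρa ^ (α - β) = (-β) * C := by
    rw [hrapow, hCdef]
    linear_combination a ^ γ * hBαAμ
  have hBα : 0 < B * α := mul_pos hBpos hα
  have hcrit : ∀ ρ : ℝ, 0 < ρ → (deriv (fun r => h a r) ρ = 0 ↔ ρ = ρa) := by
    intro ρ hρ
    rw [hdh ρ hρ]
    constructor
    · intro h0
      have hne : ρ ^ (β - 1) ≠ 0 := ne_of_gt (Real.rpow_pos_of_pos hρ _)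
      have h1 : (-β) * C - B * α * ρ ^ (α - β) = 0 := by
        rcases mul_eq_zero.mp h0 with hx | hx
        · exact absurd hx hne
        · exact hx
      have h2 : ρ ^ (α - β) = ρa ^ (α - β) := by
        have h3 : B * α * ρ ^ (α - β) = B * α * ρa ^ (α - β) := by linarith [hkey]
        exact mul_left_cancel₀ (ne_of_gt hBα) h3
      have h3 : (ρ ^ (α - β)) ^ (α - β)⁻¹ = (ρa ^ (α - β)) ^ (α - β)⁻¹ := by rw [h2]
      rwa [← Real.rpow_mul hρ.le, ← Real.rpow_mul hρapos.le, mul_inv_cancel₀ hαβne,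
        Real.rpow_one, Real.rpow_one] at h3
    · intro hx
      rw [hx]
      have h1 : (-β) * C - B * α * ρa ^ (α - β) = 0 := by linarith [hkey]
      rw [h1, mul_zero]
  have hmax : ∀ ρ : ℝ, 0 < ρ → ρ ≠ ρa → h a ρ < h a ρa := by
    intro ρ hρ hne
    rw [hhg ρ hρ, hhg ρa hρapos]
    rcases lt_or_gt_of_ne hne with hlt | hgt
    · have hmono : StrictMonoOn g (Icc ρ ρa) := by
        apply strictMonoOn_of_deriv_pos (convex_Icc _ _)
        · intro x hx
          exact ((hg' x (lt_of_lt_of_le hρ hx.1)).continuousAt).continuousWithinAt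
        · intro x hx
          rw [interior_Icc] at hx
          have hx0 : 0 < x := lt_trans hρ hx.1
          rw [(hg' x hx0).deriv]
          apply mul_pos (Real.rpow_pos_of_pos hx0 _)
          have h1 : x ^ (α - β) < ρa ^ (α - β) := Real.rpow_lt_rpow hx0.le hx.2 hαβ
          have h5 := mul_lt_mul_of_pos_left h1 hBα
          linarith [hkey]
      exact hmono (Set.left_mem_Icc.mpr hlt.le) (Set.right_mem_Icc.mpr hlt.le) hlt
    · have hanti : StrictAntiOn g (Icc ρa ρ) := by
        apply strictAntiOn_of_deriv_neg (convex_Icc _ _)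
        · intro x hx
          exact ((hg' x (lt_of_lt_of_le hρapos hx.1)).continuousAt).continuousWithinAt
        · intro x hx
          rw [interior_Icc] at hx
          have hx0 : 0 < x := lt_trans hρapos hx.1
          rw [(hg' x hx0).deriv]
          apply mul_neg_of_pos_of_neg (Real.rpow_pos_of_pos hx0 _)
          have h1 : ρa ^ (α - β) < x ^ (α - β) := Real.rpow_lt_rpow hρapos.le hx.1 hαβ
          have h5 := mul_lt_mul_of_pos_left h1 hBα
          linarith [hkey]
      exact hanti (Set.left_mem_Icc.mpr hgt.le) (Set.right_mem_Icc.mpr hgt.le) hgt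
  have hraα : ρa ^ α = Aμ ^ (α / (α - β)) * a ^ (4 * s1 / (N:ℝ)) := by
    rw [hρa, Real.mul_rpow (Real.rpow_pos_of_pos hAμpos e1).le (Real.rpow_pos_of_pos ha e2).le,
      ← Real.rpow_mul hAμpos.le, ← Real.rpow_mul ha.le, he1α, he2α]
  have hsplit2 : ρa ^ α = ρa ^ (α - β) * ρa ^ β := by
    rw [← Real.rpow_add hρapos, show α - β + β = α by ring]
  have h2 : B * α * ρa ^ α = (-β) * (C * ρa ^ β) := by
    rw [hsplit2]
    linear_combination ρa ^ β * hkey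
  have hval : h a ρa = 1 / 2 - Kμ * a ^ (4 * s1 / (N:ℝ)) := by
    rw [hhg ρa hρapos]
    have h3 : Kμ * a ^ (4 * s1 / (N:ℝ)) = B * (1 - α / β) * ρa ^ α := by
      rw [hKμdef, mul_assoc, ← hraα]
    simp only [hgdef]
    rw [h3]
    have h4 : C * ρa ^ β = -(B * α * ρa ^ α) / β := by
      field_simp
      linarith [h2]
    rw [h4]
    field_simp
    ring
  have hX : 0 < 4 * s1 / (N:ℝ) := by positivity
  have ha0pow : ((1 / (2 * Kμ)) ^ ((N:ℝ) / (4 * s1))) ^ (4 * s1 / (N:ℝ)) = 1 / (2 * Kμ) := by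
    rw [← Real.rpow_mul (by positivity), show (N:ℝ) / (4 * s1) * (4 * s1 / (N:ℝ)) = 1 by
      field_simp, Real.rpow_one]
  have ha0pos : 0 < (1 / (2 * Kμ)) ^ ((N:ℝ) / (4 * s1)) :=
    Real.rpow_pos_of_pos (by positivity) _
  have hKμinv : Kμ * (1 / (2 * Kμ)) = 1 / 2 := by
    field_simp
  refine ⟨hρapos, hcrit, hmax, hval, ?_, ?_, ?_⟩
  · intro hlt
    rw [hval]
    have h1 : a ^ (4 * s1 / (N:ℝ)) < 1 / (2 * Kμ) := by
      rw [← ha0pow]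
      exact Real.rpow_lt_rpow ha.le hlt hX
    have h5 := mul_lt_mul_of_pos_left h1 hKμpos
    linarith [hKμinv]
  · intro heq
    rw [hval, heq, ha0pow]
    linarith [hKμinv]
  · intro hlt
    rw [hval]
    have h1 : 1 / (2 * Kμ) < a ^ (4 * s1 / (N:ℝ)) := by
      rw [← ha0pow]
      exact Real.rpow_lt_rpow ha0pos.le hlt hX
    have h5 := mul_lt_mul_of_pos_left h1 hKμpos
    linarith [hKμinv]
end

section
/- Let N ≥ 2 be an integer, 0 < s1 < 1 with N > 2·s1, let q be real with 2 < q < 2 + 4·s1/N, and let μ, Cq, S > 0. Write 2* = 2N/(N − 2·s1) and, for a > 0, ρ > 0, h(a, ρ) = 1/2 − (1/2*)·S^{−2*/2}·ρ^{4s1/(N − 2s1)} − (μ·Cq/q)·a^{(2N − q(N − 2s1))/(2s1)}·ρ^{(N(q−2) − 4s1)/(2s1)}. Let (a₁, ρ₁) ∈ (0,∞) × (0,∞) be such that h(a₁, ρ₁) ≥ 0. Then for every a₂ ∈ (0, a₁] and every ρ₂ ∈ [(a₂/a₁)·ρ₁, ρ₁], one has h(a₂, ρ₂) ≥ 0. 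-/
open Real

theorem stmt8
    (N : ℕ) (hN : 2 ≤ N) (s1 : ℝ) (hs1 : 0 < s1) (hs1' : s1 < 1)
    (hNs1 : 2 * s1 < (N : ℝ))
    (q : ℝ) (hq : 2 < q) (hq' : q < 2 + 4 * s1 / N)
    (μ Cq S : ℝ) (hμ : 0 < μ) (hCq : 0 < Cq) (hS : 0 < S)
    (h : ℝ → ℝ → ℝ)
    (hh : ∀ a ρ : ℝ, 0 < a → 0 < ρ → h a ρ = 1 / 2
        - (1 / (2 * N / (N - 2 * s1))) * S ^ (-(2 * N / (N - 2 * s1)) / 2) *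
            ρ ^ (4 * s1 / (N - 2 * s1))
        - (μ * Cq / q) * a ^ ((2 * N - q * (N - 2 * s1)) / (2 * s1)) *
            ρ ^ ((N * (q - 2) - 4 * s1) / (2 * s1)))
    (a₁ ρ₁ : ℝ) (ha₁ : 0 < a₁) (hρ₁ : 0 < ρ₁) (hpos : 0 ≤ h a₁ ρ₁) :
    ∀ a₂ : ℝ, 0 < a₂ → a₂ ≤ a₁ →
      ∀ ρ₂ : ℝ, (a₂ / a₁) * ρ₁ ≤ ρ₂ → ρ₂ ≤ ρ₁ → 0 ≤ h a₂ ρ₂ := by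
  intro a₂ ha₂ ha₂₁ ρ₂ hρ₂l hρ₂u
  have hNpos : (0:ℝ) < N := by positivity
  have hN2s : (0:ℝ) < (N:ℝ) - 2 * s1 := by linarith
  set t : ℝ := a₂ / a₁ with ht
  have htpos : 0 < t := div_pos ha₂ ha₁
  have ht1 : t ≤ 1 := by
    rw [ht, div_le_one ha₁]; exact ha₂₁
  have hρ₂ : 0 < ρ₂ := lt_of_lt_of_le (by positivity) hρ₂l
  rw [hh a₂ ρ₂ ha₂ hρ₂]
  rw [hh a₁ ρ₁ ha₁ hρ₁] at hpos
  set A : ℝ := (1 / (2 * N / (N - 2 * s1))) * S ^ (-(2 * N / (N - 2 * s1)) / 2) with hA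
  set B : ℝ := μ * Cq / q with hB
  set α : ℝ := 4 * s1 / ((N:ℝ) - 2 * s1) with hα
  set β : ℝ := (2 * (N:ℝ) - q * ((N:ℝ) - 2 * s1)) / (2 * s1) with hβ
  set γ : ℝ := ((N:ℝ) * (q - 2) - 4 * s1) / (2 * s1) with hγ
  have hApos : 0 < A := by
    rw [hA]; positivity
  have hBpos : 0 < B := by
    rw [hB]; positivity
  have hαpos : 0 < α := by rw [hα]; positivity
  have hγneg : γ ≤ 0 := by
    rw [hγ]
    apply div_nonpos_of_nonpos_of_nonneg
    · have h4 : (q - 2) * N < 4 * s1 := (lt_div_iff₀ hNpos).mp (by linarith)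
      nlinarith
    · positivity
  -- first term
  have h1 : A * ρ₂ ^ α ≤ A * ρ₁ ^ α :=
    mul_le_mul_of_nonneg_left (Real.rpow_le_rpow hρ₂.le hρ₂u hαpos.le) hApos.le
  -- second term
  have h2 : ρ₂ ^ γ ≤ (t * ρ₁) ^ γ :=
    Real.rpow_le_rpow_of_nonpos (by positivity) hρ₂l hγneg
  have hkey : a₂ ^ β * (t * ρ₁) ^ γ ≤ a₁ ^ β * ρ₁ ^ γ := by
    have ha₂eq : a₂ = a₁ * t := by rw [ht, mul_div_assoc', eq_div_iff ha₁.ne', mul_comm]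
    have hβγ : β + γ = q - 2 := by
      rw [hβ, hγ]; field_simp; ring
    have : a₂ ^ β * (t * ρ₁) ^ γ = a₁ ^ β * ρ₁ ^ γ * t ^ (q - 2) := by
      rw [ha₂eq, Real.mul_rpow ha₁.le htpos.le, Real.mul_rpow htpos.le hρ₁.le,
        ← hβγ, Real.rpow_add htpos]
      ring
    rw [this]
    have ht2 : t ^ (q - 2) ≤ 1 :=
      Real.rpow_le_one htpos.le ht1 (by linarith)
    have hP : 0 ≤ a₁ ^ β * ρ₁ ^ γ :=
      (mul_pos (Real.rpow_pos_of_pos ha₁ β) (Real.rpow_pos_of_pos hρ₁ γ)).le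
    exact mul_le_of_le_one_right hP ht2
  have h2' : B * a₂ ^ β * ρ₂ ^ γ ≤ B * a₁ ^ β * ρ₁ ^ γ := by
    have hstep : a₂ ^ β * ρ₂ ^ γ ≤ a₂ ^ β * (t * ρ₁) ^ γ :=
      mul_le_mul_of_nonneg_left h2 (Real.rpow_pos_of_pos ha₂ β).le
    calc B * a₂ ^ β * ρ₂ ^ γ = B * (a₂ ^ β * ρ₂ ^ γ) := by ring
      _ ≤ B * (a₂ ^ β * (t * ρ₁) ^ γ) := mul_le_mul_of_nonneg_left hstep hBpos.le
      _ ≤ B * (a₁ ^ β * ρ₁ ^ γ) := mul_le_mul_of_nonneg_left hkey hBpos.le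
      _ = B * a₁ ^ β * ρ₁ ^ γ := by ring
  linarith
end
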